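/- arXiv:1710.00089 — 5 statements merged into one kernel-verified Lean document; each statement's English description precedes it below -/
import Mathlib

section
/- Every C-type lattice is indecomposable; that is, a C-type lattice is not isometric to an orthogonal direct sum L_1 ⊕ L_2 of two nontrivial lattices. -/
namespace Prism

/-- Gram matrix of a C-type lattice with parameters `a 1, …, a n` (vertices `x_0, …, x_n`). -/
def CGram (n : ℕ) (a : ℕ → ℤ) : Fin (n + 1) → Fin (n + 1) → ℤ := fun i j =>
  if (i : ℕ) = (j : ℕ) then (if (i : ℕ) = 0 then 4 else a (i : ℕ))
  else if ((i : ℕ) = 0 ∧ (j : ℕ) = 1) ∨ ((i : ℕ) = 1 ∧ (j : ℕ) = 0) then -2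
  else if (i : ℕ) + 1 = (j : ℕ) ∨ (j : ℕ) + 1 = (i : ℕ) then -1
  else 0

/-- The symmetric bilinear form of a C-type lattice. -/
def CForm (n : ℕ) (a : ℕ → ℤ) (v w : Fin (n + 1) → ℤ) : ℤ :=
  ∑ i : Fin (n + 1), ∑ j : Fin (n + 1), v i * CGram n a i j * w j

/-- Conditions on the parameters of a C-type lattice: `n ≥ 1`, all `a_i ≥ 2`, `a_1 ≥ 3`. -/
def CTypeParams (n : ℕ) (a : ℕ → ℤ) : Prop :=
  1 ≤ n ∧ (∀ i, 1 ≤ i → i ≤ n → 2 ≤ a i) ∧ 3 ≤ a 1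

/-- Numerator/denominator pair of the Hirzebruch–Jung continued fraction `[a_1, …, a_k]⁻`. -/
def hjPair : List ℤ → ℤ × ℤ
  | [] => (1, 0)
  | x :: l => (x * (hjPair l).1 - (hjPair l).2, (hjPair l).1)

/-- `a 1, …, a n` are the coefficients of the HJ expansion of `(2q-p)/(q-p)`, all `≥ 2`
(`a_1 ≥ 3` being forced since `q > p`); i.e. the data defining the lattice `C(p,q)`. -/
def IsCpq (p q : ℤ) (n : ℕ) (a : ℕ → ℤ) : Prop :=
  CTypeParams n a ∧ hjPair ((List.range' 1 n).map fun i => a i) = (2 * q - p, q - p)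

/-- Standard dot product on `ℤ^m`. -/
def dotF {m : ℕ} (v w : Fin m → ℤ) : ℤ := ∑ i, v i * w i

/-- Orthogonal complement of `σ` in `ℤ^m`. -/
def perp {m : ℕ} (σ : Fin m → ℤ) : Submodule ℤ (Fin m → ℤ) where
  carrier := {v | dotF v σ = 0}
  add_mem' := by
    intro a b ha hb
    simp only [Set.mem_setOf_eq, dotF, Pi.add_apply, add_mul, Finset.sum_add_distrib] at *
    omega
  zero_mem' := by simp [dotF]
  smul_mem' := by
    intro c v hv
    simp only [Set.mem_setOf_eq, dotF, Pi.smul_apply, smul_eq_mul, mul_assoc] at *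
    rw [← Finset.mul_sum, hv, mul_zero]

/-- Changemaker vector in `ℤ^m`. -/
def IsChangemaker (m : ℕ) (σ : Fin m → ℤ) : Prop :=
  Monotone σ ∧ (∀ i, 0 ≤ σ i) ∧
    ∀ k : ℤ, 0 ≤ k → k ≤ ∑ i, σ i → ∃ S : Finset (Fin m), k = ∑ i ∈ S, σ i

/-- The interval `x_a + x_{a+1} + ⋯ + x_b` in a C-type lattice of rank `n+1`. -/
def intVec (n : ℕ) (a b : ℕ) : Fin (n + 1) → ℤ := fun i =>
  if a ≤ (i : ℕ) ∧ (i : ℕ) ≤ b then 1 else 0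

/-- Breakability with respect to the C-type form. -/
def CBreakable (n : ℕ) (a : ℕ → ℤ) (ℓ : Fin (n + 1) → ℤ) : Prop :=
  ∃ x y : Fin (n + 1) → ℤ, ℓ = x + y ∧ 3 ≤ CForm n a x x ∧ 3 ≤ CForm n a y y ∧
    CForm n a x y = -1

/-- Breakability inside the lattice `(σ)^⊥ ⊆ ℤ^m`. -/
def PerpBreakable {m : ℕ} (σ : Fin m → ℤ) (ℓ : Fin m → ℤ) : Prop :=
  ∃ x y : Fin m → ℤ, x ∈ perp σ ∧ y ∈ perp σ ∧ ℓ = x + y ∧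
    3 ≤ dotF x x ∧ 3 ≤ dotF y y ∧ dotF x y = -1

/-- The number `δ([I],[J])` of dangling edges for intervals `[a,b]` and `[c,d]`,
counted with multiplicity (the edge `x_0x_1` is doubled). -/
def deltaCount (n a b c d : ℕ) : ℤ :=
  ∑ k ∈ Finset.range n,
    if (((a ≤ k ∧ k ≤ b) ∧ (c ≤ k + 1 ∧ k + 1 ≤ d)) ∨
          ((c ≤ k ∧ k ≤ d) ∧ (a ≤ k + 1 ∧ k + 1 ≤ b))) ∧
        (¬((a ≤ k ∧ k ≤ b) ∧ (c ≤ k ∧ k ≤ d)) ∨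
          ¬((a ≤ k + 1 ∧ k + 1 ≤ b) ∧ (c ≤ k + 1 ∧ k + 1 ≤ d)))
    then (if k = 0 then 2 else 1) else 0

/-- `v_j` is tight: `σ_j = 1 + σ_0 + ⋯ + σ_{j-1}`. -/
def IsTight {m : ℕ} (σ : Fin m → ℤ) (j : Fin m) : Prop :=
  σ j = 1 + ∑ i ∈ Finset.Iio j, σ i

/-- The vector `2e_0 + e_1 + ⋯ + e_{j-1} - e_j`. -/
def tightVec (m : ℕ) (j : Fin m) : Fin m → ℤ := fun i =>
  if i = j then -1 else if i < j then (if (i : ℕ) = 0 then 2 else 1) else 0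

/-- `A ⊆ {0,…,j-1}` with `σ_j = ∑_{i ∈ A} σ_i`, maximizing `∑_{i ∈ A} 2^i`. -/
def MaxSubsetRep {m : ℕ} (σ : Fin m → ℤ) (j : Fin m) (A : Finset (Fin m)) : Prop :=
  A ⊆ Finset.Iio j ∧ σ j = ∑ i ∈ A, σ i ∧
    ∀ B ⊆ Finset.Iio j, σ j = ∑ i ∈ B, σ i →
      ∑ i ∈ B, 2 ^ (i : ℕ) ≤ ∑ i ∈ A, 2 ^ (i : ℕ)

/-- The vector `∑_{i ∈ A} e_i - e_j`. -/
def subsetVec (m : ℕ) (A : Finset (Fin m)) (j : Fin m) : Fin m → ℤ := fun i =>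
  if i = j then -1 else if i ∈ A then 1 else 0

/-- `v` is the standard basis vector `v_j` of the changemaker lattice `(σ)^⊥`. -/
def IsStdBasisVec {m : ℕ} (σ : Fin m → ℤ) (j : Fin m) (v : Fin m → ℤ) : Prop :=
  (IsTight σ j ∧ v = tightVec m j) ∨
    (¬IsTight σ j ∧ ∃ A : Finset (Fin m), MaxSubsetRep σ j A ∧ v = subsetVec m A j)

/-- The subset `A` has a gappy index for `v_j`: some `i ∈ A` with `i < j - 1`, `i + 1 ∉ A`. -/
def IsGappyAt {m : ℕ} (A : Finset (Fin m)) (j : Fin m) : Prop :=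
  ∃ i ∈ A, (i : ℕ) + 1 < (j : ℕ) ∧ ∀ i' ∈ A, (i' : ℕ) ≠ (i : ℕ) + 1

/-- The reflection about `x_0^⊥` (using that `⟨x_0, v⟩` is always even and `⟨x_0,x_0⟩ = 4`). -/
def cRefl (n : ℕ) (a : ℕ → ℤ) (v : Fin (n + 1) → ℤ) : Fin (n + 1) → ℤ :=
  v - (CForm n a (Pi.single 0 1) v / 2) • Pi.single 0 1


namespace PrismAux

/-- extension of a vector on `Fin (n+1)` to `ℕ` by zero -/
def ext (n : ℕ) (w : Fin (n+1) → ℤ) : ℕ → ℤ := fun k => if h : k < n + 1 then w ⟨k, h⟩ else 0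

lemma ext_lt {n : ℕ} (w : Fin (n+1) → ℤ) (j : ℕ) (h : j < n+1) : ext n w j = w ⟨j, h⟩ :=
  dif_pos h

lemma ext_gt {n : ℕ} (w : Fin (n+1) → ℤ) (j : ℕ) (h : n < j) : ext n w j = 0 :=
  dif_neg (by omega)

lemma ext_coe {n : ℕ} (w : Fin (n+1) → ℤ) (i : Fin (n+1)) : ext n w (i : ℕ) = w i := by
  rw [ext_lt w _ i.isLt]

/-- Gram matrix as a function on ℕ -/
def gN (a : ℕ → ℤ) (i j : ℕ) : ℤ :=
  if i = j then (if i = 0 then 4 else a i)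
  else if (i = 0 ∧ j = 1) ∨ (i = 1 ∧ j = 0) then -2
  else if i + 1 = j ∨ j + 1 = i then -1
  else 0

lemma gN_split (a : ℕ → ℤ) (i j : ℕ) :
    gN a i j = (if j = i then (if i = 0 then 4 else a i) else 0)
      - (if j = i + 1 then (if i = 0 then 2 else 1) else 0)
      - (if i = j + 1 then (if j = 0 then 2 else 1) else 0) := by
  unfold gN
  split_ifs <;> omega

/-- integer helpers -/
lemma int_mul_pred_nonneg (t : ℤ) : 0 ≤ t * (t - 1) := by
  rcases le_or_gt 1 t with h | h
  · exact mul_nonneg (by omega) (by omega)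
  · have : 0 ≤ (-t) * (1 - t) := mul_nonneg (by omega) (by omega)
    nlinarith

lemma sq_pred_nonneg (t : ℤ) : 0 ≤ t^2 - t := by
  have := int_mul_pred_nonneg t; nlinarith

lemma sq_succ_nonneg (t : ℤ) : 0 ≤ t^2 + t := by
  have := int_mul_pred_nonneg (-t); nlinarith

lemma eq_zero_or_one_of_sq (t : ℤ) (h : t^2 - t = 0) : t = 0 ∨ t = 1 := by
  have h' : t * (t - 1) = 0 := by nlinarith
  rcases mul_eq_zero.mp h' with h'' | h'' <;> omega

lemma eq_zero_or_neg_one_of_sq (t : ℤ) (h : t^2 + t = 0) : t = 0 ∨ t = -1 := by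
  have h' : t * (t + 1) = 0 := by nlinarith
  rcases mul_eq_zero.mp h' with h'' | h'' <;> omega

lemma one_le_sq_of_ne_zero (t : ℤ) (h : t ≠ 0) : 1 ≤ t^2 := by
  rcases lt_or_gt_of_ne h with h' | h' <;> nlinarith

/-- chain propagation -/
lemma chainU (u : ℕ → ℤ) (t n : ℕ) (h : ∀ i, t ≤ i → i < n → u (i+1) = u (i+2)) :
    ∀ j, t + 1 ≤ j → j ≤ n + 1 → u j = u (t+1) := by
  have key : ∀ d, t + 1 + d ≤ n + 1 → u (t + 1 + d) = u (t + 1) := by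
    intro d
    induction d with
    | zero => intro _; rfl
    | succ d ih =>
      intro hd
      have h1 : u (t + d + 1) = u (t + d + 2) := h (t + d) (by omega) (by omega)
      have h2 : t + 1 + (d + 1) = t + d + 2 := by omega
      rw [h2, ← h1]
      have h3 : t + d + 1 = t + 1 + d := by omega
      rw [h3]
      exact ih (by omega)
  intro j h1 h2
  have : j = t + 1 + (j - (t+1)) := by omega
  rw [this]; exact key _ (by omega)

lemma sum_split_zero (n : ℕ) (f : ℕ → ℤ) (hf : ∀ i ∈ Finset.range n, 0 ≤ f i) (T : ℤ)
    (hT : 0 ≤ T) (h : T + ∑ i ∈ Finset.range n, f i = 0) :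
    T = 0 ∧ ∀ i ∈ Finset.range n, f i = 0 := by
  have hs := Finset.sum_nonneg hf
  exact ⟨by linarith, (Finset.sum_eq_zero_iff_of_nonneg hf).mp (by linarith)⟩

end PrismAux
section Part2
open PrismAux Prism

variable {n : ℕ}

lemma cform_eq (n : ℕ) (a : ℕ → ℤ) (v w : Fin (n+1) → ℤ) :
    Prism.CForm n a v w = ∑ i ∈ Finset.range (n+1), ∑ j ∈ Finset.range (n+1),
      ext n v i * gN a i j * ext n w j := by
  rw [Prism.CForm,
    ← Fin.sum_univ_eq_sum_range (fun i => ∑ j ∈ Finset.range (n+1), ext n v i * gN a i j * ext n w j) (n+1)]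
  refine Finset.sum_congr rfl fun i _ => ?_
  rw [← Fin.sum_univ_eq_sum_range (fun j => ext n v ↑i * gN a ↑i j * ext n w j) (n+1)]
  refine Finset.sum_congr rfl fun j _ => ?_
  rw [ext_coe, ext_coe]
  rfl

lemma rowsum (n : ℕ) (a : ℕ → ℤ) (u : ℕ → ℤ) (h0 : ∀ j, n < j → u j = 0) (k : ℕ) (hk : k ≤ n) :
    ∑ j ∈ Finset.range (n+1), gN a k j * u j
      = (if k = 0 then 4 else a k) * u k - (if k = 0 then 2 else 1) * u (k+1)
        - (if 1 ≤ k then (if k = 1 then 2 else 1) * u (k-1) else 0) := by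
  have hsplit : ∀ j ∈ Finset.range (n+1), gN a k j * u j
      = (if j = k then (if k = 0 then 4 else a k) * u j else 0)
        - (if j = k + 1 then (if k = 0 then 2 else 1) * u j else 0)
        - (if k = j + 1 then (if j = 0 then 2 else 1) * u j else 0) := by
    intro j _
    rw [gN_split]
    split_ifs <;> ring
  rw [Finset.sum_congr rfl hsplit, Finset.sum_sub_distrib, Finset.sum_sub_distrib,
    Finset.sum_ite_eq' (Finset.range (n+1)) k (fun j => (if k = 0 then 4 else a k) * u j),
    Finset.sum_ite_eq' (Finset.range (n+1)) (k+1) (fun j => (if k = 0 then 2 else 1) * u j),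
    if_pos (Finset.mem_range.mpr (by omega))]
  have h2 : (if k + 1 ∈ Finset.range (n+1) then (if k = 0 then 2 else 1) * u (k+1) else 0)
      = (if k = 0 then 2 else 1) * u (k+1) := by
    by_cases hc : k + 1 ∈ Finset.range (n+1)
    · rw [if_pos hc]
    · rw [if_neg hc, h0 (k+1) (by simp only [Finset.mem_range] at hc; omega), mul_zero]
  rw [h2]
  congr 1
  rcases k with _ | m
  · rw [Finset.sum_eq_zero fun j _ => if_neg (by omega)]
    norm_num
  · have hcong : ∀ j ∈ Finset.range (n+1),
        (if m + 1 = j + 1 then (if j = 0 then 2 else 1) * u j else 0)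
          = (if j = m then (if j = 0 then 2 else 1) * u j else 0) :=
      fun j _ => if_congr (by omega) rfl rfl
    rw [Finset.sum_congr rfl hcong,
      Finset.sum_ite_eq' (Finset.range (n+1)) m (fun j => (if j = 0 then 2 else 1) * u j),
      if_pos (Finset.mem_range.mpr (by omega)), if_pos (by omega : 1 ≤ m + 1)]
    have h1 : m + 1 - 1 = m := rfl
    rw [h1]
    congr 1
    by_cases hm : m = 0
    · rw [if_pos hm, if_pos (by omega : m + 1 = 1)]
    · rw [if_neg hm, if_neg (by omega : ¬ m + 1 = 1)]

lemma qsos (n : ℕ) (a : ℕ → ℤ) (u : ℕ → ℤ) (h0 : ∀ j, n < j → u j = 0) (hn : 1 ≤ n) :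
    ∑ i ∈ Finset.range (n+1), (u i * ∑ j ∈ Finset.range (n+1), gN a i j * u j)
      = (2 * u 0 - u 1)^2
        + ∑ i ∈ Finset.range n, ((u (i+1) - u (i+2))^2 + (a (i+1) - 2) * u (i+1)^2) := by
  have hrow : ∀ i ∈ Finset.range (n+1), u i * ∑ j ∈ Finset.range (n+1), gN a i j * u j
      = u i * ((if i = 0 then 4 else a i) * u i - (if i = 0 then 2 else 1) * u (i+1)
          - (if 1 ≤ i then (if i = 1 then 2 else 1) * u (i-1) else 0)) := by
    intro i hi
    rw [rowsum n a u h0 i (Nat.lt_succ_iff.mp (Finset.mem_range.mp hi))]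
  rw [Finset.sum_congr rfl hrow, Finset.sum_range_succ']
  have hpt : ∀ i ∈ Finset.range n,
      u (i+1) * ((if i + 1 = 0 then 4 else a (i+1)) * u (i+1)
        - (if i + 1 = 0 then 2 else 1) * u (i+1+1)
        - (if 1 ≤ i + 1 then (if i + 1 = 1 then 2 else 1) * u (i+1-1) else 0))
      = ((u (i+1) - u (i+2))^2 + (a (i+1) - 2) * u (i+1)^2)
        + ((u (i+1)^2 - u i * u (i+1)) - (u (i+2)^2 - u (i+1) * u (i+2)))
        - (if i = 0 then u 0 * u 1 else 0) := by
    intro i _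
    have e1 : i + 1 - 1 = i := rfl
    rw [if_neg (by omega : ¬ i + 1 = 0), if_neg (by omega : ¬ i + 1 = 0),
      if_pos (by omega : 1 ≤ i + 1), e1]
    by_cases hi : i = 0
    · subst hi
      rw [if_pos rfl, if_pos rfl]
      ring
    · rw [if_neg (by omega : ¬ i + 1 = 1), if_neg hi]
      ring
  rw [Finset.sum_congr rfl hpt, Finset.sum_sub_distrib, Finset.sum_add_distrib,
    Finset.sum_range_sub' (fun i => u (i+1)^2 - u i * u (i+1)),
    Finset.sum_ite_eq' (Finset.range n) 0 (fun _ => u 0 * u 1),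
    if_pos (Finset.mem_range.mpr (by omega))]
  rw [if_pos rfl, if_pos rfl, if_neg (by omega : ¬ 1 ≤ 0)]
  have hn1 : u (n+1) = 0 := h0 _ (by omega)
  rw [hn1]
  ring

end Part2
section Part3
open PrismAux

/-- Case k = 0 : the vertex x₀ of norm 4. -/
lemma keyU0 (n : ℕ) (a u : ℕ → ℤ) (hn : 1 ≤ n)
    (ha : ∀ i, 1 ≤ i → i ≤ n → 2 ≤ a i) (ha1 : 3 ≤ a 1)
    (h0 : ∀ j, n < j → u j = 0)
    (h : (2 * u 0 - u 1)^2
        + ∑ i ∈ Finset.range n, ((u (i+1) - u (i+2))^2 + (a (i+1) - 2) * u (i+1)^2)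
      = 4 * u 0 - 2 * u 1) :
    (∀ j, u j = 0) ∨ (∀ j, u j = if j = 0 then 1 else 0) := by
  have hc : ∀ i, i < n → (0:ℤ) ≤ a (i+1) - 2 := fun i hi => by
    have := ha (i+1) (by omega) (by omega); omega
  have hun1 : u (n+1) = 0 := h0 _ (by omega)
  have hFnn : ∀ i ∈ Finset.range n,
      (0:ℤ) ≤ (u (i+1) - u (i+2))^2 + (a (i+1) - 2) * u (i+1)^2 := by
    intro i hi
    have := hc i (Finset.mem_range.mp hi)
    positivity
  have hS := Finset.sum_nonneg hFnn
  by_cases hu1 : u 1 = 0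
  · -- T = 2u0 is even
    rw [hu1] at h
    have h4 : 4 * (u 0 * (u 0 - 1)) + ∑ i ∈ Finset.range n,
        ((u (i+1) - u (i+2))^2 + (a (i+1) - 2) * u (i+1)^2) = 0 := by linear_combination h
    obtain ⟨hT, hFz⟩ := sum_split_zero n _ hFnn _
      (by have := int_mul_pred_nonneg (u 0); linarith) h4
    have hu0 : u 0 = 0 ∨ u 0 = 1 := by
      have h5 : u 0 * (u 0 - 1) = 0 := by linarith
      rcases mul_eq_zero.mp h5 with h6 | h6 <;> omega
    have hD : ∀ i, i < n → u (i+1) = u (i+2) := by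
      intro i hi
      have hz := hFz i (Finset.mem_range.mpr hi)
      have h1 := sq_nonneg (u (i+1) - u (i+2))
      have h2 : (0:ℤ) ≤ (a (i+1) - 2) * u (i+1)^2 :=
        mul_nonneg (hc i hi) (sq_nonneg _)
      have h3 : (u (i+1) - u (i+2))^2 = 0 := by linarith
      have := sq_eq_zero_iff.mp h3
      omega
    have hchain := chainU u 0 n (fun i _ hi => hD i hi)
    have hside : ∀ j, j ≠ 0 → u j = 0 := by
      intro j hj
      by_cases h2 : j ≤ n + 1
      · rw [hchain j (by omega) h2]; exact hu1
      · exact h0 j (by omega)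
    rcases hu0 with h6 | h6
    · exact Or.inl fun j => by
        by_cases hj : j = 0
        · rw [hj]; exact h6
        · exact hside j hj
    · exact Or.inr fun j => by
        by_cases hj : j = 0
        · rw [hj, if_pos rfl]; exact h6
        · rw [if_neg hj]; exact hside j hj
  · -- u 1 ≠ 0 : contradiction
    exfalso
    have hsq : 1 ≤ u 1 ^ 2 := one_le_sq_of_ne_zero _ hu1
    have hSle : ∑ i ∈ Finset.range n,
        ((u (i+1) - u (i+2))^2 + (a (i+1) - 2) * u (i+1)^2) ≤ 1 := by
      nlinarith [sq_nonneg (2 * u 0 - u 1 - 1)]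
    rw [Finset.sum_add_distrib] at hSle
    have hS2 : (a 1 - 2) * u 1 ^ 2
        ≤ ∑ i ∈ Finset.range n, (a (i+1) - 2) * u (i+1)^2 := by
      have := Finset.single_le_sum (f := fun i => (a (i+1) - 2) * u (i+1)^2)
        (fun i hi => mul_nonneg (hc i (Finset.mem_range.mp hi)) (sq_nonneg _))
        (Finset.mem_range.mpr (by omega : 0 < n))
      simpa using this
    have hS2' : (1:ℤ) ≤ ∑ i ∈ Finset.range n, (a (i+1) - 2) * u (i+1)^2 := by
      nlinarith
    have hDz : ∑ i ∈ Finset.range n, (u (i+1) - u (i+2))^2 ≤ 0 := by linarith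
    have hDnn : ∀ i ∈ Finset.range n, (0:ℤ) ≤ (u (i+1) - u (i+2))^2 :=
      fun i _ => sq_nonneg _
    have hDeq := (Finset.sum_eq_zero_iff_of_nonneg hDnn).mp
      (le_antisymm hDz (Finset.sum_nonneg hDnn))
    have hD : ∀ i, i < n → u (i+1) = u (i+2) := by
      intro i hi
      have := sq_eq_zero_iff.mp (hDeq i (Finset.mem_range.mpr hi))
      omega
    have hchain := chainU u 0 n (fun i _ hi => hD i hi)
    have : u (n+1) = u 1 := hchain (n+1) (by omega) (le_refl _)
    rw [hun1] at this
    exact hu1 this.symm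

end Part3
section Part4
open PrismAux

/-- Case k = 1 : the vertex x₁ of norm a₁ ≥ 3. -/
lemma keyU1 (n : ℕ) (a u : ℕ → ℤ) (hn : 1 ≤ n)
    (ha : ∀ i, 1 ≤ i → i ≤ n → 2 ≤ a i) (ha1 : 3 ≤ a 1)
    (h0 : ∀ j, n < j → u j = 0)
    (h : (2 * u 0 - u 1)^2
        + ∑ i ∈ Finset.range n, ((u (i+1) - u (i+2))^2 + (a (i+1) - 2) * u (i+1)^2)
      = a 1 * u 1 - u 2 - 2 * u 0) :
    (∀ j, u j = 0) ∨ (∀ j, u j = if j = 1 then 1 else 0) := by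
  have hc : ∀ i, i < n → (0:ℤ) ≤ a (i+1) - 2 := fun i hi => by
    have := ha (i+1) (by omega) (by omega); omega
  have hun1 : u (n+1) = 0 := h0 _ (by omega)
  set F : ℕ → ℤ := fun i => (u (i+1) - u (i+2))^2 + (a (i+1) - 2) * u (i+1)^2
      - (if i = 0 then (u 1 - u 2) + (a 1 - 2) * u 1 else 0) with hFdef
  have hFsum : ∑ i ∈ Finset.range n, F i
      = (∑ i ∈ Finset.range n, ((u (i+1) - u (i+2))^2 + (a (i+1) - 2) * u (i+1)^2))
        - ((u 1 - u 2) + (a 1 - 2) * u 1) := by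
    rw [hFdef, Finset.sum_sub_distrib,
      Finset.sum_ite_eq' (Finset.range n) 0 (fun _ => (u 1 - u 2) + (a 1 - 2) * u 1),
      if_pos (Finset.mem_range.mpr (by omega))]
  have hzero : ((2 * u 0 - u 1)^2 + (2 * u 0 - u 1)) + ∑ i ∈ Finset.range n, F i = 0 := by
    rw [hFsum]; linear_combination h
  have hFnn : ∀ i ∈ Finset.range n, 0 ≤ F i := by
    intro i hi
    have hci := hc i (Finset.mem_range.mp hi)
    by_cases hi0 : i = 0
    · subst hi0
      rw [hFdef]
      simp only [eq_self_iff_true, if_true, show (0:ℕ)+1 = 1 from rfl,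
        show (0:ℕ)+2 = 2 from rfl]
      have h1 := sq_pred_nonneg (u 1 - u 2)
      have h2 : (0:ℤ) ≤ (a 1 - 2) * (u 1^2 - u 1) :=
        mul_nonneg (by omega) (sq_pred_nonneg _)
      nlinarith
    · rw [hFdef]
      simp only [if_neg hi0]
      have h2 : (0:ℤ) ≤ (a (i+1) - 2) * u (i+1)^2 := mul_nonneg hci (sq_nonneg _)
      have h1 := sq_nonneg (u (i+1) - u (i+2))
      linarith
  obtain ⟨hTz, hFz⟩ := sum_split_zero n F hFnn _ (sq_succ_nonneg _) hzero
  have hT01 : 2 * u 0 - u 1 = 0 ∨ 2 * u 0 - u 1 = -1 := eq_zero_or_neg_one_of_sq _ hTz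
  have hF0 := hFz 0 (Finset.mem_range.mpr (by omega))
  rw [hFdef] at hF0
  simp only [eq_self_iff_true, if_true, show (0:ℕ)+1 = 1 from rfl,
    show (0:ℕ)+2 = 2 from rfl] at hF0
  have hx0 : (u 1 - u 2)^2 - (u 1 - u 2) = 0 := by
    have h1 := sq_pred_nonneg (u 1 - u 2)
    have h2 : (0:ℤ) ≤ (a 1 - 2) * (u 1^2 - u 1) :=
      mul_nonneg (by omega) (sq_pred_nonneg _)
    nlinarith
  have hy0 : (a 1 - 2) * (u 1^2 - u 1) = 0 := by
    have h1 := sq_pred_nonneg (u 1 - u 2)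
    have h2 : (0:ℤ) ≤ (a 1 - 2) * (u 1^2 - u 1) :=
      mul_nonneg (by omega) (sq_pred_nonneg _)
    nlinarith
  have hu1v : u 1 = 0 ∨ u 1 = 1 := by
    rcases mul_eq_zero.mp hy0 with h6 | h6
    · omega
    · exact eq_zero_or_one_of_sq _ h6
  have hDi : ∀ i, 1 ≤ i → i < n → u (i+1) = u (i+2) := by
    intro i h1 h2
    have hzi := hFz i (Finset.mem_range.mpr h2)
    rw [hFdef] at hzi
    simp only [if_neg (by omega : ¬ i = 0)] at hzi
    have ha2 : (0:ℤ) ≤ (a (i+1) - 2) * u (i+1)^2 := mul_nonneg (hc i h2) (sq_nonneg _)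
    have hb2 := sq_nonneg (u (i+1) - u (i+2))
    have h3 : (u (i+1) - u (i+2))^2 = 0 := by linarith
    have := sq_eq_zero_iff.mp h3
    omega
  have hchain := chainU u 1 n hDi
  have hu2 : u 2 = 0 := by
    have := hchain (n+1) (by omega) (le_refl _)
    rw [hun1] at this
    exact this.symm
  have hside : ∀ j, j ≠ 0 → j ≠ 1 → u j = 0 := by
    intro j hj0 hj1
    by_cases h2 : j ≤ n + 1
    · rw [hchain j (by omega) h2]; exact hu2
    · exact h0 j (by omega)
  rcases hu1v with h6 | h6
  · refine Or.inl fun j => ?_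
    by_cases hj0 : j = 0
    · rw [hj0]; omega
    · by_cases hj1 : j = 1
      · rw [hj1]; exact h6
      · exact hside j hj0 hj1
  · refine Or.inr fun j => ?_
    by_cases hj0 : j = 0
    · rw [hj0, if_neg (by omega : ¬ (0:ℕ) = 1)]; omega
    · by_cases hj1 : j = 1
      · rw [hj1, if_pos rfl]; exact h6
      · rw [if_neg hj1]; exact hside j hj0 hj1

/-- Case k = m + 2 : interior/terminal vertices. -/
lemma keyU2 (n : ℕ) (a u : ℕ → ℤ) (m : ℕ) (hm : m + 2 ≤ n)
    (ha : ∀ i, 1 ≤ i → i ≤ n → 2 ≤ a i) (ha1 : 3 ≤ a 1)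
    (h0 : ∀ j, n < j → u j = 0)
    (h : (2 * u 0 - u 1)^2
        + ∑ i ∈ Finset.range n, ((u (i+1) - u (i+2))^2 + (a (i+1) - 2) * u (i+1)^2)
      = a (m+2) * u (m+2) - u (m+3) - u (m+1)) :
    (∀ j, u j = 0) ∨ (∀ j, u j = if j = m + 2 then 1 else 0) := by
  have hc : ∀ i, i < n → (0:ℤ) ≤ a (i+1) - 2 := fun i hi => by
    have := ha (i+1) (by omega) (by omega); omega
  have hun1 : u (n+1) = 0 := h0 _ (by omega)
  set F : ℕ → ℤ := fun i => (u (i+1) - u (i+2))^2 + (a (i+1) - 2) * u (i+1)^2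
      + (if i = m then u (m+1) - u (m+2) else 0)
      - (if i = m + 1 then (u (m+2) - u (m+3)) + (a (m+2) - 2) * u (m+2) else 0) with hFdef
  have hFsum : ∑ i ∈ Finset.range n, F i
      = (∑ i ∈ Finset.range n, ((u (i+1) - u (i+2))^2 + (a (i+1) - 2) * u (i+1)^2))
        + (u (m+1) - u (m+2)) - ((u (m+2) - u (m+3)) + (a (m+2) - 2) * u (m+2)) := by
    rw [hFdef, Finset.sum_sub_distrib, Finset.sum_add_distrib,
      Finset.sum_ite_eq' (Finset.range n) m (fun _ => u (m+1) - u (m+2)),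
      Finset.sum_ite_eq' (Finset.range n) (m+1)
        (fun _ => (u (m+2) - u (m+3)) + (a (m+2) - 2) * u (m+2)),
      if_pos (Finset.mem_range.mpr (by omega)), if_pos (Finset.mem_range.mpr (by omega))]
  have hzero : (2 * u 0 - u 1)^2 + ∑ i ∈ Finset.range n, F i = 0 := by
    rw [hFsum]; linear_combination h
  have hFnn : ∀ i ∈ Finset.range n, 0 ≤ F i := by
    intro i hi
    have hci := hc i (Finset.mem_range.mp hi)
    rcases eq_or_ne i m with rfl | him
    · rw [hFdef]
      simp only [eq_self_iff_true, if_true, if_neg (by omega : ¬ i = i + 1)]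
      have h1 := sq_succ_nonneg (u (i+1) - u (i+2))
      have h2 : (0:ℤ) ≤ (a (i+1) - 2) * u (i+1)^2 := mul_nonneg hci (sq_nonneg _)
      nlinarith
    · rcases eq_or_ne i (m+1) with rfl | him1
      · rw [hFdef]
        simp only [if_neg him, eq_self_iff_true, if_true, show m+1+1 = m+2 from rfl,
          show m+1+2 = m+3 from rfl]
        have h1 := sq_pred_nonneg (u (m+2) - u (m+3))
        have h2 : (0:ℤ) ≤ (a (m+2) - 2) * (u (m+2)^2 - u (m+2)) :=
          mul_nonneg (show (0:ℤ) ≤ a (m+2) - 2 from hc (m+1) (by omega)) (sq_pred_nonneg _)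
        nlinarith
      · rw [hFdef]
        simp only [if_neg him, if_neg him1]
        have h1 := sq_nonneg (u (i+1) - u (i+2))
        have h2 : (0:ℤ) ≤ (a (i+1) - 2) * u (i+1)^2 := mul_nonneg hci (sq_nonneg _)
        linarith
  obtain ⟨hTz, hFz⟩ := sum_split_zero n F hFnn _ (sq_nonneg _) hzero
  have hT : 2 * u 0 - u 1 = 0 := sq_eq_zero_iff.mp hTz
  have hFm := hFz m (Finset.mem_range.mpr (by omega))
  rw [hFdef] at hFm
  simp only [eq_self_iff_true, if_true, if_neg (by omega : ¬ m = m + 1)] at hFm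
  have hDm : u (m+1) - u (m+2) = 0 ∨ u (m+1) - u (m+2) = -1 := by
    apply eq_zero_or_neg_one_of_sq
    have h1 := sq_succ_nonneg (u (m+1) - u (m+2))
    have h2 : (0:ℤ) ≤ (a (m+1) - 2) * u (m+1)^2 :=
      mul_nonneg (hc m (by omega)) (sq_nonneg _)
    nlinarith
  have hcm : (a (m+1) - 2) * u (m+1)^2 = 0 := by
    have h1 := sq_succ_nonneg (u (m+1) - u (m+2))
    have h2 : (0:ℤ) ≤ (a (m+1) - 2) * u (m+1)^2 :=
      mul_nonneg (hc m (by omega)) (sq_nonneg _)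
    nlinarith
  have hFm1 := hFz (m+1) (Finset.mem_range.mpr (by omega))
  rw [hFdef] at hFm1
  simp only [if_neg (by omega : ¬ m + 1 = m), eq_self_iff_true, if_true,
    show m+1+1 = m+2 from rfl, show m+1+2 = m+3 from rfl] at hFm1
  have hDm1 : u (m+2) - u (m+3) = 0 ∨ u (m+2) - u (m+3) = 1 := by
    apply eq_zero_or_one_of_sq
    have h1 := sq_pred_nonneg (u (m+2) - u (m+3))
    have h2 : (0:ℤ) ≤ (a (m+2) - 2) * (u (m+2)^2 - u (m+2)) :=
      mul_nonneg (show (0:ℤ) ≤ a (m+2) - 2 from hc (m+1) (by omega)) (sq_pred_nonneg _)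
    nlinarith
  have hDi : ∀ i, i < n → i ≠ m → i ≠ m + 1 →
      u (i+1) = u (i+2) ∧ (a (i+1) - 2) * u (i+1)^2 = 0 := by
    intro i h2 h3 h4
    have hzi := hFz i (Finset.mem_range.mpr h2)
    rw [hFdef] at hzi
    simp only [if_neg h3, if_neg h4] at hzi
    have ha2 : (0:ℤ) ≤ (a (i+1) - 2) * u (i+1)^2 := mul_nonneg (hc i h2) (sq_nonneg _)
    have hb2 := sq_nonneg (u (i+1) - u (i+2))
    have h5 : (u (i+1) - u (i+2))^2 = 0 := by linarith
    have h6 := sq_eq_zero_iff.mp h5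
    exact ⟨by omega, by linarith⟩
  have hcu1 : (a 1 - 2) * u 1 ^ 2 = 0 := by
    rcases eq_or_ne m 0 with rfl | hm0
    · exact hcm
    · exact (hDi 0 (by omega) (by omega) (by omega)).2
  have hu1 : u 1 = 0 := by
    rcases mul_eq_zero.mp hcu1 with h6 | h6
    · omega
    · exact sq_eq_zero_iff.mp h6
  have hfront := chainU u 0 m (fun i _ h2 => (hDi i (by omega) (by omega) (by omega)).1)
  have hback := chainU u (m+2) n (fun i h1 h2 => (hDi i h2 (by omega) (by omega)).1)
  have hum3 : u (m+3) = 0 := (hback (n+1) (by omega) (le_refl _)).symm.trans hun1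
  have hum1 : u (m+1) = 0 := (hfront (m+1) (by omega) (le_refl _)).trans hu1
  have huk : u (m+2) = 0 ∨ u (m+2) = 1 := by
    rcases hDm1 with h6 | h6 <;> omega
  have hu0 : u 0 = 0 := by omega
  have hside : ∀ j, j ≠ m + 2 → u j = 0 := by
    intro j hj
    rcases Nat.eq_zero_or_pos j with rfl | hj1
    · exact hu0
    by_cases h2 : j ≤ m + 1
    · rw [hfront j hj1 h2]; exact hu1
    · by_cases h3 : j ≤ n + 1
      · rw [hback j (by omega) h3]; exact hum3
      · exact h0 j (by omega)
  rcases huk with h6 | h6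
  · refine Or.inl fun j => ?_
    by_cases hj : j = m + 2
    · rw [hj]; exact h6
    · exact hside j hj
  · refine Or.inr fun j => ?_
    by_cases hj : j = m + 2
    · rw [hj, if_pos rfl]; exact h6
    · rw [if_neg hj]; exact hside j hj

end Part4
section Part5
open PrismAux

lemma ext_single (n : ℕ) (k : Fin (n+1)) (i : ℕ) :
    ext n (Pi.single k 1) i = if i = (k : ℕ) then 1 else 0 := by
  by_cases h : i < n + 1
  · rw [ext_lt _ _ h, Pi.single_apply]
    exact if_congr (by rw [Fin.ext_iff]) rfl rfl
  · rw [ext_gt _ _ (by omega), if_neg (by have := k.isLt; omega)]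

lemma cform_single (n : ℕ) (a : ℕ → ℤ) (k : Fin (n+1)) (w : Fin (n+1) → ℤ) :
    Prism.CForm n a (Pi.single k 1) w
      = ∑ j ∈ Finset.range (n+1), gN a (k : ℕ) j * ext n w j := by
  rw [cform_eq]
  have hpt : ∀ i ∈ Finset.range (n+1),
      (∑ j ∈ Finset.range (n+1), ext n (Pi.single k 1) i * gN a i j * ext n w j)
        = if i = (k : ℕ) then ∑ j ∈ Finset.range (n+1), gN a i j * ext n w j else 0 := by
    intro i _
    by_cases h : i = (k : ℕ)
    · rw [if_pos h]
      refine Finset.sum_congr rfl fun j _ => ?_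
      rw [ext_single, if_pos h, one_mul]
    · rw [if_neg h]
      refine Finset.sum_eq_zero fun j _ => ?_
      rw [ext_single, if_neg h, zero_mul, zero_mul]
  rw [Finset.sum_congr rfl hpt,
    Finset.sum_ite_eq' (Finset.range (n+1)) ((k : ℕ))
      (fun i => ∑ j ∈ Finset.range (n+1), gN a i j * ext n w j),
    if_pos (Finset.mem_range.mpr k.isLt)]

lemma keyC (n : ℕ) (a : ℕ → ℤ) (hC : Prism.CTypeParams n a) (k : Fin (n+1))
    (w : Fin (n+1) → ℤ)
    (h : Prism.CForm n a w w = Prism.CForm n a (Pi.single k 1) w) :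
    w = 0 ∨ w = Pi.single k 1 := by
  obtain ⟨hn, ha, ha1⟩ := hC
  have h0 : ∀ j, n < j → ext n w j = 0 := fun j hj => ext_gt _ _ hj
  have hQ : Prism.CForm n a w w
      = (2 * ext n w 0 - ext n w 1)^2
        + ∑ i ∈ Finset.range n,
            ((ext n w (i+1) - ext n w (i+2))^2 + (a (i+1) - 2) * ext n w (i+1)^2) := by
    calc Prism.CForm n a w w
        = ∑ i ∈ Finset.range (n+1),
            (ext n w i * ∑ j ∈ Finset.range (n+1), gN a i j * ext n w j) := by
          rw [cform_eq]
          exact Finset.sum_congr rfl fun i _ => by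
            rw [Finset.mul_sum]
            exact Finset.sum_congr rfl fun j _ => mul_assoc _ _ _
      _ = _ := qsos n a (ext n w) h0 hn
  have hkk : (k : ℕ) ≤ n := Nat.lt_succ_iff.mp k.isLt
  have hR := (cform_single n a k w).trans (rowsum n a (ext n w) h0 (k : ℕ) hkk)
  have hmain : (∀ j, ext n w j = 0) ∨ (∀ j, ext n w j = if j = (k : ℕ) then 1 else 0) := by
    obtain ⟨kv, hkvlt⟩ := k
    simp only at hR hkk ⊢
    rcases kv with _ | kv1
    · refine keyU0 n a (ext n w) hn ha ha1 h0 ?_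
      have hR' : Prism.CForm n a (Pi.single (⟨0, hkvlt⟩ : Fin (n+1)) 1) w
          = 4 * ext n w 0 - 2 * ext n w 1 := by
        rw [hR]
        norm_num
      exact hQ.symm.trans (h.trans hR')
    · rcases kv1 with _ | m
      · refine keyU1 n a (ext n w) hn ha ha1 h0 ?_
        have hR' : Prism.CForm n a (Pi.single (⟨1, hkvlt⟩ : Fin (n+1)) 1) w
            = a 1 * ext n w 1 - ext n w 2 - 2 * ext n w 0 := by
          rw [hR]
          norm_num
        exact hQ.symm.trans (h.trans hR')
      · refine keyU2 n a (ext n w) m hkk ha ha1 h0 ?_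
        have hR' : Prism.CForm n a (Pi.single (⟨m + 2, hkvlt⟩ : Fin (n+1)) 1) w
            = a (m+2) * ext n w (m+2) - ext n w (m+3) - ext n w (m+1) := by
          rw [hR, if_neg (by omega : ¬ m + 2 = 0), if_neg (by omega : ¬ m + 2 = 0),
            if_pos (by omega : 1 ≤ m + 2), if_neg (by omega : ¬ m + 2 = 1)]
          norm_num
        exact hQ.symm.trans (h.trans hR')
  rcases hmain with hh | hh
  · left
    funext j
    have := hh (j : ℕ)
    rwa [ext_coe] at this
  · right
    funext j
    have := hh (j : ℕ)
    rw [ext_coe] at this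
    rw [this, Pi.single_apply]
    exact if_congr (Fin.val_eq_val j k) rfl rfl

end Part5
section Part6
open PrismAux

lemma cform_single_single (n : ℕ) (a : ℕ → ℤ) (i j : Fin (n+1)) :
    Prism.CForm n a (Pi.single i 1) (Pi.single j 1) = Prism.CGram n a i j := by
  rw [cform_single]
  have hpt : ∀ l ∈ Finset.range (n+1),
      gN a (i : ℕ) l * ext n (Pi.single j 1) l
        = if l = (j : ℕ) then gN a (i : ℕ) l else 0 := by
    intro l _
    rw [ext_single]
    by_cases h : l = (j : ℕ)
    · rw [if_pos h, if_pos h, mul_one]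
    · rw [if_neg h, if_neg h, mul_zero]
  rw [Finset.sum_congr rfl hpt,
    Finset.sum_ite_eq' (Finset.range (n+1)) ((j : ℕ)) (fun l => gN a (i : ℕ) l),
    if_pos (Finset.mem_range.mpr j.isLt)]
  rfl

lemma cgram_adj_ne (n : ℕ) (a : ℕ → ℤ) (k : ℕ) (hk : k < n) :
    Prism.CForm n a (Pi.single (⟨k, by omega⟩ : Fin (n+1)) 1)
      (Pi.single (⟨k+1, by omega⟩ : Fin (n+1)) 1) ≠ 0 := by
  rw [cform_single_single]
  show gN a k (k+1) ≠ 0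
  unfold gN
  split_ifs <;> omega

end Part6

section MainAux
open PrismAux
/-- Corollary 3.4: every C-type lattice is indecomposable: it is not
isometric to an orthogonal direct sum of two nontrivial lattices. -/
theorem statement2 (n : ℕ) (a : ℕ → ℤ) (hC : CTypeParams n a) :
    ¬ ∃ (m₁ m₂ : ℕ) (M₁ : Fin m₁ → Fin m₁ → ℤ) (M₂ : Fin m₂ → Fin m₂ → ℤ),
        1 ≤ m₁ ∧ 1 ≤ m₂ ∧
        (∀ i j, M₁ i j = M₁ j i) ∧ (∀ i j, M₂ i j = M₂ j i) ∧
        ∃ φ : (Fin (n + 1) → ℤ) ≃ₗ[ℤ] (Fin m₁ → ℤ) × (Fin m₂ → ℤ),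
          ∀ v w : Fin (n + 1) → ℤ,
            CForm n a v w =
              (∑ i, ∑ j, (φ v).1 i * M₁ i j * (φ w).1 j) +
              (∑ i, ∑ j, (φ v).2 i * M₂ i j * (φ w).2 j) := by
  have hn := hC.1
  rintro ⟨m₁, m₂, M₁, M₂, hm₁, hm₂, -, -, φ, hφ⟩
  classical
  -- dichotomy for each basis vector
  have hdich : ∀ k : Fin (n+1),
      ((φ (Pi.single k 1)).1 = 0) ∨ ((φ (Pi.single k 1)).2 = 0) := by
    intro k
    have hφw : φ (φ.symm (0, (φ (Pi.single k 1)).2)) = (0, (φ (Pi.single k 1)).2) :=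
      φ.apply_symm_apply _
    have h1 : Prism.CForm n a (φ.symm (0, (φ (Pi.single k 1)).2))
          (φ.symm (0, (φ (Pi.single k 1)).2))
        = Prism.CForm n a (Pi.single k 1) (φ.symm (0, (φ (Pi.single k 1)).2)) := by
      rw [hφ, hφ, hφw]
      simp
    rcases keyC n a hC k _ h1 with h | h
    · right
      rw [h, map_zero] at hφw
      exact (congrArg Prod.snd hφw).symm
    · left
      rw [h] at hφw
      exact congrArg Prod.fst hφw
  -- propagation along the chain
  have hstep : ∀ k : ℕ, ∀ _ : k < n,
      (((φ (Pi.single (⟨k, by omega⟩ : Fin (n+1)) 1)).2 = 0) ↔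
        ((φ (Pi.single (⟨k+1, by omega⟩ : Fin (n+1)) 1)).2 = 0)) := by
    intro k hk
    constructor
    · intro h2
      by_contra hne
      have h1 := (hdich _).resolve_right hne
      apply cgram_adj_ne n a k hk
      rw [hφ, h2, h1]
      simp
    · intro h2
      by_contra hne
      have h1 := (hdich _).resolve_right hne
      apply cgram_adj_ne n a k hk
      rw [hφ, h2, h1]
      simp
  have hconst : ∀ k : ℕ, ∀ hk : k < n + 1,
      (((φ (Pi.single (⟨k, hk⟩ : Fin (n+1)) 1)).2 = 0) ↔
        ((φ (Pi.single (⟨0, by omega⟩ : Fin (n+1)) 1)).2 = 0)) := by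
    intro k
    induction k with
    | zero => intro hk; rfl
    | succ k ih =>
      intro hk
      rw [← hstep k (by omega)]
      exact ih (by omega)
  by_cases hP : (φ (Pi.single (⟨0, by omega⟩ : Fin (n+1)) 1)).2 = 0
  · -- all second components vanish : contradicts m₂ ≥ 1
    have hall : ∀ k : Fin (n+1), (φ (Pi.single k 1)).2 = 0 := by
      intro k
      have := (hconst (k : ℕ) k.isLt).mpr hP
      simpa using this
    set ψ : (Fin (n+1) → ℤ) →ₗ[ℤ] (Fin m₂ → ℤ) :=
      (LinearMap.snd ℤ (Fin m₁ → ℤ) (Fin m₂ → ℤ)).comp (φ : (Fin (n+1) → ℤ) →ₗ[ℤ] _)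
      with hψdef
    have hψ0 : ψ = 0 := by
      apply (Pi.basisFun ℤ (Fin (n+1))).ext
      intro i
      rw [hψdef]
      simp only [Pi.basisFun_apply, LinearMap.coe_comp, Function.comp_apply,
        LinearMap.snd_apply, LinearEquiv.coe_coe, LinearMap.zero_apply]
      exact hall i
    have h2 : ψ (φ.symm (0, Pi.single (⟨0, hm₂⟩ : Fin m₂) 1))
        = Pi.single (⟨0, hm₂⟩ : Fin m₂) 1 := by
      rw [hψdef]
      simp only [LinearMap.coe_comp, Function.comp_apply, LinearMap.snd_apply,
        LinearEquiv.coe_coe]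
      rw [φ.apply_symm_apply]
    rw [hψ0] at h2
    have h3 := congrFun h2.symm (⟨0, hm₂⟩ : Fin m₂)
    simp at h3
  · -- all first components vanish : contradicts m₁ ≥ 1
    have hall : ∀ k : Fin (n+1), (φ (Pi.single k 1)).1 = 0 := by
      intro k
      refine (hdich k).resolve_right fun h => hP ?_
      have := (hconst (k : ℕ) k.isLt).mp (by simpa using h)
      exact this
    set ψ : (Fin (n+1) → ℤ) →ₗ[ℤ] (Fin m₁ → ℤ) :=
      (LinearMap.fst ℤ (Fin m₁ → ℤ) (Fin m₂ → ℤ)).comp (φ : (Fin (n+1) → ℤ) →ₗ[ℤ] _)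
      with hψdef
    have hψ0 : ψ = 0 := by
      apply (Pi.basisFun ℤ (Fin (n+1))).ext
      intro i
      rw [hψdef]
      simp only [Pi.basisFun_apply, LinearMap.coe_comp, Function.comp_apply,
        LinearMap.fst_apply, LinearEquiv.coe_coe, LinearMap.zero_apply]
      exact hall i
    have h2 : ψ (φ.symm (Pi.single (⟨0, hm₁⟩ : Fin m₁) 1, 0))
        = Pi.single (⟨0, hm₁⟩ : Fin m₁) 1 := by
      rw [hψdef]
      simp only [LinearMap.coe_comp, Function.comp_apply, LinearMap.fst_apply,
        LinearEquiv.coe_coe]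
      rw [φ.apply_symm_apply]
    rw [hψ0] at h2
    have h3 := congrFun h2.symm (⟨0, hm₁⟩ : Fin m₁)
    simp at h3

end MainAux

end Prism
end

section
/- Let C be a C-type lattice and let [I] and [J] be two intervals in C. Then ⟨[I],[J]⟩ = |[I ∩ J]| − δ([I],[J]), where [I ∩ J] denotes the sum of the vertices in I ∩ J (interpreted as 0 with norm 0 when I ∩ J is empty). -/
namespace Prism

/-- The Gram matrix as a function on `ℕ`. -/
def G' (a : ℕ → ℤ) : ℕ → ℕ → ℤ := fun i j =>
  if i = j then (if i = 0 then 4 else a i)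
  else if (i = 0 ∧ j = 1) ∨ (i = 1 ∧ j = 0) then -2
  else if i + 1 = j ∨ j + 1 = i then -1
  else 0

set_option linter.unreachableTactic false
set_option linter.unusedTactic false

lemma G'_zero (a : ℕ → ℤ) (i j : ℕ) (h : i + 1 < j ∨ j + 1 < i) : G' a i j = 0 := by
  simp only [G']
  split_ifs <;> first | rfl | omega | (exfalso; omega)

lemma G'_edge (a : ℕ → ℤ) (k : ℕ) :
    G' a k (k + 1) = if k = 0 then -2 else -1 := by
  simp only [G']
  split_ifs <;> first | omega | simp_all | (simp_all; omega)

lemma G'_edge' (a : ℕ → ℤ) (k : ℕ) :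
    G' a (k + 1) k = if k = 0 then -2 else -1 := by
  simp only [G']
  split_ifs <;> first | omega | simp_all | (simp_all; omega)

lemma cform_eq_s5 (n : ℕ) (aa : ℕ → ℤ) (u v : ℕ → ℤ) :
    CForm n aa (fun i => u ↑i) (fun i => v ↑i)
      = ∑ i ∈ Finset.range (n + 1), ∑ j ∈ Finset.range (n + 1), u i * G' aa i j * v j := by
  unfold CForm
  rw [← Fin.sum_univ_eq_sum_range]
  apply Finset.sum_congr rfl
  intro i _
  rw [← Fin.sum_univ_eq_sum_range]
  apply Finset.sum_congr rfl
  intro j _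
  rfl

lemma tri (G : ℕ → ℕ → ℤ) (hG : ∀ i j, i + 1 < j ∨ j + 1 < i → G i j = 0)
    (f g : ℕ → ℤ) :
    ∀ m, ∑ i ∈ Finset.range m, ∑ j ∈ Finset.range m, f i * G i j * g j
      = ∑ i ∈ Finset.range m, f i * G i i * g i
        + ∑ k ∈ Finset.range (m - 1),
            (f k * G k (k + 1) * g (k + 1) + f (k + 1) * G (k + 1) k * g k) := by
  intro m
  induction m with
  | zero => simp
  | succ s ih =>
    rcases Nat.eq_zero_or_pos s with hs | hs
    · subst hs; simp
    · obtain ⟨t, rfl⟩ : ∃ t, s = t + 1 := ⟨s - 1, by omega⟩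
      have hrow : ∑ i ∈ Finset.range (t + 2), ∑ j ∈ Finset.range (t + 2), f i * G i j * g j
          = ∑ i ∈ Finset.range (t + 2),
              ((∑ j ∈ Finset.range (t + 1), f i * G i j * g j) + f i * G i (t + 1) * g (t + 1)) :=
        Finset.sum_congr rfl fun i _ => Finset.sum_range_succ _ _
      have hcol : ∑ i ∈ Finset.range (t + 1), f i * G i (t + 1) * g (t + 1)
          = f t * G t (t + 1) * g (t + 1) := by
        apply Finset.sum_eq_single_of_mem t (Finset.self_mem_range_succ t)
        intro b hb hbt
        rw [hG b (t + 1) (by simp at hb; omega)]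
        ring
      have hcol' : ∑ j ∈ Finset.range (t + 1), f (t + 1) * G (t + 1) j * g j
          = f (t + 1) * G (t + 1) t * g t := by
        apply Finset.sum_eq_single_of_mem t (Finset.self_mem_range_succ t)
        intro b hb hbt
        rw [hG (t + 1) b (by simp at hb; omega)]
        ring
      rw [hrow, Finset.sum_add_distrib,
        Finset.sum_range_succ (fun i => ∑ j ∈ Finset.range (t + 1), f i * G i j * g j),
        Finset.sum_range_succ (fun i => f i * G i (t + 1) * g (t + 1)),
        hcol, hcol', ih,
        show t + 1 + 1 - 1 = t + 1 from rfl, show t + 1 - 1 = t from rfl]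
      simp only [Finset.sum_range_succ]
      ring

set_option maxHeartbeats 2000000 in
/-- Lemma 3.9: for intervals `[I] = [a,b]` and `[J] = [c,d]`,
`⟨[I],[J]⟩ = |[I ∩ J]| - δ([I],[J])`. Here `I ∩ J = [max a c, min b d]`, whose interval
vector is `0` (of norm `0`) when the intersection is empty. -/
theorem statement5 (n : ℕ) (aa : ℕ → ℤ) (hC : CTypeParams n aa)
    (a b c d : ℕ) (hab : a ≤ b) (hb : b ≤ n) (hcd : c ≤ d) (hd : d ≤ n) :
    CForm n aa (intVec n a b) (intVec n c d) =
      CForm n aa (intVec n (max a c) (min b d)) (intVec n (max a c) (min b d)) -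
        deltaCount n a b c d := by
  set f : ℕ → ℤ := fun i => if a ≤ i ∧ i ≤ b then 1 else 0 with hf
  set g : ℕ → ℤ := fun i => if c ≤ i ∧ i ≤ d then 1 else 0 with hg
  set w : ℕ → ℤ := fun i => if max a c ≤ i ∧ i ≤ min b d then 1 else 0 with hw
  have e1 : CForm n aa (intVec n a b) (intVec n c d)
      = ∑ i ∈ Finset.range (n + 1), ∑ j ∈ Finset.range (n + 1), f i * G' aa i j * g j :=
    cform_eq_s5 n aa f g
  have e2 : CForm n aa (intVec n (max a c) (min b d)) (intVec n (max a c) (min b d))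
      = ∑ i ∈ Finset.range (n + 1), ∑ j ∈ Finset.range (n + 1), w i * G' aa i j * w j :=
    cform_eq_s5 n aa w w
  rw [e1, e2, tri (G' aa) (G'_zero aa) f g (n + 1), tri (G' aa) (G'_zero aa) w w (n + 1),
    Nat.add_sub_cancel]
  have hD : ∑ i ∈ Finset.range (n + 1), f i * G' aa i i * g i
      = ∑ i ∈ Finset.range (n + 1), w i * G' aa i i * w i := by
    apply Finset.sum_congr rfl
    intro i _
    simp only [hf, hg, hw, sup_le_iff, le_inf_iff]
    split_ifs <;> first | ring1 | (exfalso; omega)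
  have hE : ∑ k ∈ Finset.range n,
        (f k * G' aa k (k + 1) * g (k + 1) + f (k + 1) * G' aa (k + 1) k * g k)
      = (∑ k ∈ Finset.range n,
          (w k * G' aa k (k + 1) * w (k + 1) + w (k + 1) * G' aa (k + 1) k * w k))
        - deltaCount n a b c d := by
    rw [deltaCount, ← Finset.sum_sub_distrib]
    apply Finset.sum_congr rfl
    intro k _
    rw [G'_edge, G'_edge']
    simp only [hf, hg, hw, sup_le_iff, le_inf_iff]
    split_ifs <;> first | omega | norm_num
  rw [hD, hE]
  ring

end Prism
end

section
/- Let C be a C-type lattice and let [I], [J] be intervals in C. Then δ([I],[J]) ∈ {0, 1, 2, 3}. Moreover, if δ([I],[J]) = 3, then ⟨x_0,[I]⟩ = −⟨x_0,[J]⟩ and this common absolute value is 2 (i.e. ⟨x_0,[I]⟩ = ±2 and ⟨x_0,[J]⟩ = ∓2). -/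
namespace Prism

/-- The dangling condition for edge `k`–`k+1`. -/
def Dang (a b c d k : ℕ) : Prop :=
  (((a ≤ k ∧ k ≤ b) ∧ (c ≤ k + 1 ∧ k + 1 ≤ d)) ∨
      ((c ≤ k ∧ k ≤ d) ∧ (a ≤ k + 1 ∧ k + 1 ≤ b))) ∧
    (¬((a ≤ k ∧ k ≤ b) ∧ (c ≤ k ∧ k ≤ d)) ∨
      ¬((a ≤ k + 1 ∧ k + 1 ≤ b) ∧ (c ≤ k + 1 ∧ k + 1 ≤ d)))

instance (a b c d k : ℕ) : Decidable (Dang a b c d k) := by unfold Dang; infer_instance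

lemma dang_three (a b c d k1 k2 k3 : ℕ) (h12 : k1 ≠ k2) (h13 : k1 ≠ k3) (h23 : k2 ≠ k3)
    (H1 : Dang a b c d k1) (H2 : Dang a b c d k2) (H3 : Dang a b c d k3) : False := by
  unfold Dang at *; omega

lemma dang_zero (a b c d k : ℕ) (hab : a ≤ b) (hcd : c ≤ d) (hk : 1 ≤ k)
    (H0 : Dang a b c d 0) (Hk : Dang a b c d k) :
    (a = 0 ∧ c = 1 ∧ 1 ≤ b ∧ 1 ≤ d) ∨ (c = 0 ∧ a = 1 ∧ 1 ≤ d ∧ 1 ≤ b) := by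
  unfold Dang at *; omega

lemma cform_e0 (n : ℕ) (hn : 1 ≤ n) (aa : ℕ → ℤ) (v : Fin (n + 1) → ℤ) :
    CForm n aa (Pi.single 0 1) v = 4 * v 0 - 2 * v ⟨1, by omega⟩ := by
  unfold CForm
  rw [Finset.sum_eq_single (0 : Fin (n + 1))]
  · have hterm : ∀ j : Fin (n + 1),
        (Pi.single (0 : Fin (n + 1)) (1 : ℤ) : Fin (n + 1) → ℤ) 0 * CGram n aa 0 j * v j
        = (if j = 0 then 4 * v j else 0) + (if j = ⟨1, by omega⟩ then -2 * v j else 0) := by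
      intro j
      rw [Pi.single_eq_same, one_mul]
      rcases j with ⟨jv, hjv⟩
      unfold CGram
      simp only [Fin.ext_iff, Fin.val_zero, Fin.val_mk]
      by_cases h0 : jv = 0
      · subst h0; norm_num
      · by_cases h1 : jv = 1
        · subst h1; norm_num
        · rw [if_neg (by omega), if_neg (by omega), if_neg (by omega), if_neg (by omega)]
          simp only [show ¬(0 + 1 = jv ∨ jv + 1 = 0) by omega, if_false]
          norm_num
    rw [Finset.sum_congr rfl fun j _ => hterm j, Finset.sum_add_distrib,
        Finset.sum_ite_eq' Finset.univ (0 : Fin (n + 1)) (fun j => 4 * v j),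
        Finset.sum_ite_eq' Finset.univ (⟨1, by omega⟩ : Fin (n + 1)) (fun j => -2 * v j)]
    simp only [Finset.mem_univ, if_true]
    ring
  · intro i _ hi
    simp [Pi.single_eq_of_ne hi]
  · intro h; exact absurd (Finset.mem_univ _) h

lemma deltaCount_eq (n a b c d : ℕ) :
    deltaCount n a b c d =
      (((Finset.range n).filter (fun k => Dang a b c d k)).card : ℤ) +
        (if 0 ∈ (Finset.range n).filter (fun k => Dang a b c d k) then 1 else 0) := by
  have h1 : deltaCount n a b c d =
      ∑ k ∈ (Finset.range n).filter (fun k => Dang a b c d k),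
        (if k = 0 then (2 : ℤ) else 1) := by
    rw [Finset.sum_filter, deltaCount]
    refine Finset.sum_congr rfl fun k _ => ?_
    unfold Dang
    exact if_congr Iff.rfl rfl rfl
  rw [h1]
  have h2 : ∀ k ∈ (Finset.range n).filter (fun k => Dang a b c d k),
      (if k = 0 then (2 : ℤ) else 1) = 1 + (if k = 0 then 1 else 0) := by
    intro k _; split_ifs <;> norm_num
  rw [Finset.sum_congr rfl h2, Finset.sum_add_distrib, Finset.sum_const, nsmul_eq_mul, mul_one,
    Finset.sum_ite_eq' _ 0 (fun _ => (1 : ℤ))]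

/-- Lemma 3.11: for intervals `[I] = [a,b]` and `[J] = [c,d]`,
`δ([I],[J]) ∈ {0,1,2,3}`, and if `δ([I],[J]) = 3` then
`⟨x_0,[I]⟩ = -⟨x_0,[J]⟩ = ±2`. -/
theorem statement7 (n : ℕ) (aa : ℕ → ℤ) (hC : CTypeParams n aa)
    (a b c d : ℕ) (hab : a ≤ b) (hb : b ≤ n) (hcd : c ≤ d) (hd : d ≤ n) :
    (deltaCount n a b c d = 0 ∨ deltaCount n a b c d = 1 ∨
      deltaCount n a b c d = 2 ∨ deltaCount n a b c d = 3) ∧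
    (deltaCount n a b c d = 3 →
      CForm n aa (Pi.single 0 1) (intVec n a b) =
        -CForm n aa (Pi.single 0 1) (intVec n c d) ∧
      (CForm n aa (Pi.single 0 1) (intVec n a b) = 2 ∨
        CForm n aa (Pi.single 0 1) (intVec n a b) = -2)) := by
  obtain ⟨hn, -, -⟩ := hC
  set F := (Finset.range n).filter (fun k => Dang a b c d k) with hF
  have hkey := deltaCount_eq n a b c d
  rw [← hF] at hkey
  have hcard : F.card ≤ 2 := by
    by_contra hlt
    have h2lt : 2 < F.card := by omega
    obtain ⟨k1, k2, k3, h1, h2, h3, h12, h13, h23⟩ := Finset.two_lt_card_iff.mp h2lt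
    rw [hF, Finset.mem_filter] at h1 h2 h3
    exact dang_three a b c d k1 k2 k3 h12 h13 h23 h1.2 h2.2 h3.2
  constructor
  · rw [hkey]; split_ifs <;> omega
  · intro h3
    rw [hkey] at h3
    have h0F : 0 ∈ F ∧ F.card = 2 := by
      split_ifs at h3 with h0
      · exact ⟨h0, by omega⟩
      · exfalso; omega
    obtain ⟨h0F, hc2⟩ := h0F
    have h1lt : 1 < F.card := by omega
    obtain ⟨k, hkF, hk0⟩ := Finset.exists_mem_ne h1lt 0
    rw [hF, Finset.mem_filter] at h0F hkF
    have hcase := dang_zero a b c d k hab hcd (by omega) h0F.2 hkF.2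
    rw [cform_e0 n hn aa, cform_e0 n hn aa]
    rcases hcase with ⟨ha, hc, hb1, hd1⟩ | ⟨hc, ha, hd1, hb1⟩ <;>
      simp only [intVec, Fin.val_zero, Fin.val_mk] <;>
      split_ifs <;> omega


end Prism
end

section
/- Let C be a C-type lattice (so in particular a_1 ≥ 3). Then there is no element v ∈ C with ⟨v, x_0⟩ ≠ 0 and |v| = 2. -/
namespace Prism

namespace S8

def g (a : ℕ → ℤ) : ℕ → ℕ → ℤ := fun i j =>
  if i = j then (if i = 0 then 4 else a i)
  else if (i = 0 ∧ j = 1) ∨ (i = 1 ∧ j = 0) then -2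
  else if i + 1 = j ∨ j + 1 = i then -1
  else 0

lemma g_far (a : ℕ → ℤ) {i j : ℕ} (h : i + 1 < j ∨ j + 1 < i) : g a i j = 0 := by
  unfold g; rw [if_neg (by omega), if_neg (by omega), if_neg (by omega)]

lemma col (a : ℕ → ℤ) (f : ℕ → ℤ) (m : ℕ) :
    ∑ i ∈ Finset.range (m + 2), f i * g a i 0 = 4 * f 0 - 2 * f 1 := by
  induction m with
  | zero => simp [Finset.sum_range_succ, g]; ring
  | succ k ih =>
      rw [show k + 1 + 2 = (k + 2) + 1 from rfl, Finset.sum_range_succ, ih,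
        g_far a (show (k+2) + 1 < 0 ∨ 0 + 1 < k + 2 by omega)]
      ring

lemma one_le_sq {x : ℤ} (h : x ≠ 0) : 1 ≤ x ^ 2 := by
  rcases lt_or_gt_of_ne h with h | h <;> nlinarith

lemma quad (a : ℕ → ℤ) (f : ℕ → ℤ) (m : ℕ) :
    ∑ i ∈ Finset.range (m + 2), ∑ j ∈ Finset.range (m + 2), f i * g a i j * f j
      = 4 * f 0 ^ 2 - 4 * f 0 * f 1
        + (∑ k ∈ Finset.range (m + 1), a (k + 1) * f (k + 1) ^ 2)
        - 2 * ∑ k ∈ Finset.range m, f (k + 1) * f (k + 2) := by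
  induction m with
  | zero => simp [Finset.sum_range_succ, g]; ring
  | succ k ih =>
      have hrow : ∑ j ∈ Finset.range (k + 2), f (k + 2) * g a (k + 2) j * f j
          = -(f (k + 2) * f (k + 1)) := by
        rw [Finset.sum_eq_single_of_mem (k + 1) (Finset.self_mem_range_succ _)]
        · unfold g
          rw [if_neg (by omega), if_neg (by omega), if_pos (by omega)]; ring
        · intro i hi hne
          rw [g_far a (by simp only [Finset.mem_range] at hi; omega)]; ring
      have hcol : ∑ i ∈ Finset.range (k + 2), f i * g a i (k + 2) * f (k + 2)
          = -(f (k + 1) * f (k + 2)) := by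
        rw [Finset.sum_eq_single_of_mem (k + 1) (Finset.self_mem_range_succ _)]
        · unfold g
          rw [if_neg (by omega), if_neg (by omega), if_pos (by omega)]; ring
        · intro i hi hne
          rw [g_far a (by simp only [Finset.mem_range] at hi; omega)]; ring
      have hdiag : g a (k + 2) (k + 2) = a (k + 2) := by
        unfold g; rw [if_pos rfl, if_neg (by omega)]
      have h1 : ∀ i, ∑ j ∈ Finset.range (k + 2 + 1), f i * g a i j * f j
          = (∑ j ∈ Finset.range (k + 2), f i * g a i j * f j) + f i * g a i (k+2) * f (k+2) :=
        fun i => Finset.sum_range_succ _ _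
      rw [show k + 1 + 2 = (k + 2) + 1 from rfl, Finset.sum_range_succ,
        Finset.sum_congr rfl (fun i _ => h1 i), Finset.sum_add_distrib, ih, hcol,
        h1 (k+2), hrow, hdiag,
        Finset.sum_range_succ (fun j => a (j+1) * f (j+1)^2) (k+1),
        Finset.sum_range_succ (fun j => f (j+1) * f (j+2)) k]
      simp only [show k+1+1 = k+2 from rfl]
      ring

lemma chain (a : ℕ → ℤ) (f : ℕ → ℤ) (N : ℕ) :
    (∑ k ∈ Finset.range (N + 1), a (k + 1) * f (k + 1) ^ 2)
      - 2 * ∑ k ∈ Finset.range N, f (k + 1) * f (k + 2)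
      = (a 1 - 1) * f 1 ^ 2 + f (N + 1) ^ 2
        + ∑ k ∈ Finset.range N,
            ((f (k + 1) - f (k + 2)) ^ 2 + (a (k + 2) - 2) * f (k + 2) ^ 2) := by
  induction N with
  | zero => simp; ring
  | succ k ih =>
      rw [Finset.sum_range_succ (fun j => a (j+1) * f (j+1)^2) (k+1),
        Finset.sum_range_succ (fun j => f (j+1) * f (j+2)) k,
        Finset.sum_range_succ (fun j => (f (j+1) - f (j+2))^2 + (a (j+2)-2) * f (j+2)^2) k]
      simp only [show k+1+1 = k+2 from rfl]
      linear_combination ih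

lemma tail (f : ℕ → ℤ) (h : f 1 ≠ 0) (N : ℕ) :
    1 ≤ f (N + 1) ^ 2 + ∑ k ∈ Finset.range N, (f (k + 1) - f (k + 2)) ^ 2 := by
  induction N with
  | zero => simpa using one_le_sq h
  | succ k ih =>
      rw [Finset.sum_range_succ]
      simp only [show k+1+1 = k+2 from rfl]
      by_cases h2 : f (k + 2) = 0
      · rw [h2]
        nlinarith [ih]
      · have := one_le_sq h2
        have hs : 0 ≤ ∑ k ∈ Finset.range k, (f (k + 1) - f (k + 2)) ^ 2 :=
          Finset.sum_nonneg fun _ _ => sq_nonneg _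
        nlinarith [sq_nonneg (f (k + 1) - f (k + 2))]

end S8

/-- Lemma 4.10: in a C-type lattice (where `a_1 ≥ 3`), there is no
element `v` with `⟨v, x_0⟩ ≠ 0` and `|v| = 2`. -/

theorem statement8 (n : ℕ) (a : ℕ → ℤ) (hC : CTypeParams n a) :
    ¬ ∃ v : Fin (n + 1) → ℤ,
        CForm n a v (Pi.single 0 1) ≠ 0 ∧ CForm n a v v = 2 := by
  rintro ⟨v, hne, h2⟩
  obtain ⟨hn, ha, ha1⟩ := hC
  obtain ⟨N, rfl⟩ : ∃ N, n = N + 1 := ⟨n - 1, by omega⟩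
  set f : ℕ → ℤ := fun k => if h : k < N + 2 then v ⟨k, h⟩ else 0 with hf
  have hv : ∀ i : Fin (N + 2), v i = f (i : ℕ) := by
    intro i
    simp only [hf, i.isLt, dif_pos, Fin.eta]
  have e1 : CForm (N + 1) a v (Pi.single 0 1) = 4 * f 0 - 2 * f 1 := by
    have inner : ∀ i : Fin (N + 2),
        (∑ j : Fin (N + 2), v i * CGram (N + 1) a i j * (Pi.single 0 1 : Fin (N+2) → ℤ) j)
          = f (i : ℕ) * S8.g a (i : ℕ) 0 := by
      intro i
      rw [Finset.sum_eq_single_of_mem (0 : Fin (N + 2)) (Finset.mem_univ _)]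
      · rw [hv i, Pi.single_eq_same, mul_one]
        congr 1
      · intro j _ hj
        rw [Pi.single_eq_of_ne hj]; ring
    rw [show CForm (N + 1) a v (Pi.single 0 1)
          = ∑ i : Fin (N + 2), ∑ j : Fin (N + 2),
              v i * CGram (N + 1) a i j * (Pi.single 0 1 : Fin (N+2) → ℤ) j from rfl,
      Finset.sum_congr rfl (fun i _ => inner i),
      Fin.sum_univ_eq_sum_range (fun k => f k * S8.g a k 0) (N + 2),
      S8.col a f N]
  have e2 : CForm (N + 1) a v v
      = ∑ i ∈ Finset.range (N + 2), ∑ j ∈ Finset.range (N + 2),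
          f i * S8.g a i j * f j := by
    have inner : ∀ i : Fin (N + 2),
        (∑ j : Fin (N + 2), v i * CGram (N + 1) a i j * v j)
          = ∑ j ∈ Finset.range (N + 2), f (i : ℕ) * S8.g a (i : ℕ) j * f j := by
      intro i
      rw [← Fin.sum_univ_eq_sum_range (fun j => f (i : ℕ) * S8.g a (i : ℕ) j * f j) (N + 2)]
      exact Finset.sum_congr rfl fun j _ => by rw [hv i, hv j]; rfl
    rw [show CForm (N + 1) a v v
          = ∑ i : Fin (N + 2), ∑ j : Fin (N + 2), v i * CGram (N + 1) a i j * v j from rfl,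
      Finset.sum_congr rfl (fun i _ => inner i),
      Fin.sum_univ_eq_sum_range
        (fun k => ∑ j ∈ Finset.range (N + 2), f k * S8.g a k j * f j) (N + 2)]
  rw [e2, S8.quad a f N] at h2
  have hc := S8.chain a f N
  rw [e1] at hne
  have hS : ∑ k ∈ Finset.range N, (f (k + 1) - f (k + 2)) ^ 2
      ≤ ∑ k ∈ Finset.range N,
          ((f (k + 1) - f (k + 2)) ^ 2 + (a (k + 2) - 2) * f (k + 2) ^ 2) := by
    apply Finset.sum_le_sum
    intro k hk
    have hk' : k < N := Finset.mem_range.mp hk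
    have h2a : 2 ≤ a (k + 2) := ha (k + 2) (by omega) (by omega)
    nlinarith [sq_nonneg (f (k + 2))]
  by_cases hB : f 1 = 0
  · have hA : f 0 ≠ 0 := fun h => hne (by rw [h, hB]; ring)
    have hA2 := S8.one_le_sq hA
    have hd : 0 ≤ ∑ k ∈ Finset.range N, (f (k + 1) - f (k + 2)) ^ 2 :=
      Finset.sum_nonneg fun _ _ => sq_nonneg _
    rw [hB] at h2 hc
    nlinarith [sq_nonneg (f (N + 1)), hc, hd, hS, hA2]
  · have hB2 := S8.one_le_sq hB
    have ht := S8.tail f hB N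
    by_cases hA : f 0 = 0
    · rw [hA] at h2
      nlinarith [ht, hS, ha1, hB2, hc]
    · have hA2 := S8.one_le_sq hA
      nlinarith [sq_nonneg (f 0 - f 1), ht, hS, ha1, hB2, hA2, hc]

end Prism
end

section
/- Let n ≥ 1 and let σ = (σ_0, …, σ_{n+1}) ∈ ℤ^{n+2} be a changemaker vector such that (σ)^⊥ is isometric to a C-type lattice C with vertex basis x_0, …, x_n; fix such an isometry φ. Then σ_0 = 1, and there exist indices 0 < k_1 < k_2 < k_3 ≤ n+1 such that φ(x_0) or −φ(x_0) equals e_0 + e_{k_1} + e_{k_2} − e_{k_3} or e_0 − e_{k_1} − e_{k_2} + e_{k_3}. -/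
namespace Prism

lemma one_le_sq {c : ℤ} (h : c ≠ 0) : 1 ≤ c ^ 2 := by
  rcases h.lt_or_gt with h | h <;> nlinarith

def Sf (m : ℕ) (a c : ℕ → ℤ) : ℤ :=
  (∑ i ∈ Finset.range m, a i * c i ^ 2) - 2 * ∑ i ∈ Finset.range (m - 1), c i * c (i + 1)

lemma Sf_one (a c : ℕ → ℤ) : Sf 1 a c = a 0 * c 0 ^ 2 := by
  simp [Sf]

lemma Sf_succ (m : ℕ) (a c : ℕ → ℤ) :
    Sf (m + 2) a c =
      a 0 * c 0 ^ 2 - 2 * (c 0 * c 1) +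
        Sf (m + 1) (fun i => a (i + 1)) (fun i => c (i + 1)) := by
  unfold Sf
  rw [Finset.sum_range_succ' (fun i => a i * c i ^ 2) (m + 1),
    show m + 2 - 1 = m + 1 from rfl,
    Finset.sum_range_succ' (fun i => c i * c (i + 1)) m,
    show m + 1 - 1 = m from rfl]
  ring

lemma Sf_top (m : ℕ) (a c : ℕ → ℤ) :
    Sf (m + 2) a c = Sf (m + 1) a c + a (m + 1) * c (m + 1) ^ 2 - 2 * (c m * c (m + 1)) := by
  unfold Sf
  rw [Finset.sum_range_succ (fun i => a i * c i ^ 2) (m + 1),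
    show m + 2 - 1 = m + 1 from rfl, show m + 1 - 1 = m from rfl,
    Finset.sum_range_succ (fun i => c i * c (i + 1)) m]
  ring

lemma Sf_ge (m : ℕ) : ∀ (a c : ℕ → ℤ), (∀ i, i < m + 1 → 2 ≤ a i) →
    c 0 ^ 2 ≤ Sf (m + 1) a c ∧ (Sf (m + 1) a c = c 0 ^ 2 → c 0 = 0) := by
  induction m with
  | zero =>
    intro a c h
    have h0 := h 0 (by omega)
    rw [Sf_one]
    constructor
    · nlinarith [sq_nonneg (c 0)]
    · intro he
      have hsq : c 0 ^ 2 = 0 := by nlinarith [sq_nonneg (c 0)]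
      exact pow_eq_zero_iff (two_ne_zero) |>.mp hsq
  | succ k ih =>
    intro a c h
    obtain ⟨h1, h2⟩ := ih (fun i => a (i + 1)) (fun i => c (i + 1)) (fun i hi => h (i + 1) (by omega))
    have h1' : c 1 ^ 2 ≤ Sf (k + 1) (fun i => a (i + 1)) (fun i => c (i + 1)) := h1
    have h2' : Sf (k + 1) (fun i => a (i + 1)) (fun i => c (i + 1)) = c 1 ^ 2 → c 1 = 0 := h2
    have ha0 := h 0 (by omega)
    rw [Sf_succ]
    constructor
    · nlinarith [sq_nonneg (c 0 - c 1)]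
    · intro he
      have e1 : Sf (k + 1) (fun i => a (i + 1)) (fun i => c (i + 1)) = c 1 ^ 2 := by
        nlinarith [sq_nonneg (c 0 - c 1)]
      have hc1 : c 1 = 0 := h2' e1
      have e2 : (c 0 - c 1) ^ 2 = 0 := by nlinarith
      have := pow_eq_zero_iff (two_ne_zero) |>.mp e2
      omega

lemma Sf_ne_one (m : ℕ) : ∀ (a c : ℕ → ℤ), (∀ i, i < m → 2 ≤ a i) → Sf m a c ≠ 1 := by
  induction m with
  | zero => intro a c h; simp [Sf]
  | succ k ih =>
    intro a c h
    match k with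
    | 0 =>
      have ha := h 0 (by omega)
      rw [Sf_one]
      intro he
      rcases eq_or_ne (c 0) 0 with h0 | h0
      · rw [h0] at he; simp at he
      · have := one_le_sq h0
        nlinarith
    | l + 1 =>
      intro he
      rcases eq_or_ne (c 0) 0 with h0 | h0
      · rw [Sf_succ, h0] at he
        have : Sf (l + 1) (fun i => a (i + 1)) (fun i => c (i + 1)) = 1 := by linarith [he]
        exact ih (fun i => a (i + 1)) (fun i => c (i + 1)) (fun i hi => h (i + 1) (by omega)) this
      · obtain ⟨h1, h2⟩ := Sf_ge (l + 1) a c (fun i hi => h i (by omega))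
        have hs1 := one_le_sq h0
        have : Sf (l + 1 + 1) a c = c 0 ^ 2 := by omega
        have := h2 this
        omega

lemma Sf_big (m : ℕ) (a c : ℕ → ℤ) (h : ∀ i, i < m + 1 → 2 ≤ a i) (h3 : 3 ≤ a 0)
    (hc : c 0 ≠ 0) : c 0 ^ 2 + 2 ≤ Sf (m + 1) a c := by
  have hc2 : 1 ≤ c 0 ^ 2 := one_le_sq hc
  match m with
  | 0 => rw [Sf_one]; nlinarith
  | l + 1 =>
    rw [Sf_succ]
    obtain ⟨h1, h2⟩ := Sf_ge l (fun i => a (i + 1)) (fun i => c (i + 1))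
      (fun i hi => h (i + 1) (by omega))
    have h1' : c 1 ^ 2 ≤ Sf (l + 1) (fun i => a (i + 1)) (fun i => c (i + 1)) := h1
    have h2' : Sf (l + 1) (fun i => a (i + 1)) (fun i => c (i + 1)) = c 1 ^ 2 → c 1 = 0 := h2
    rcases eq_or_ne (c 1) 0 with h10 | h10
    · rw [h10] at h1' ⊢
      nlinarith [sq_nonneg (c 0)]
    · have hc12 : 1 ≤ c 1 ^ 2 := one_le_sq h10
      rcases eq_or_ne (Sf (l + 1) (fun i => a (i + 1)) (fun i => c (i + 1))) (c 1 ^ 2) with hS | hS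
      · exact absurd (h2' hS) h10
      · have : c 1 ^ 2 + 1 ≤ Sf (l + 1) (fun i => a (i + 1)) (fun i => c (i + 1)) := by omega
        nlinarith [sq_nonneg (c 0 - c 1)]

/- ===== auxiliary lemmas ===== -/

private def gN (a : ℕ → ℤ) (i j : ℕ) : ℤ :=
  if i = j then (if i = 0 then 4 else a i)
  else if (i = 0 ∧ j = 1) ∨ (i = 1 ∧ j = 0) then -2
  else if i + 1 = j ∨ j + 1 = i then -1
  else 0

lemma CGram_eq (n : ℕ) (a : ℕ → ℤ) (i j : Fin (n + 1)) :
    CGram n a i j = gN a (i : ℕ) (j : ℕ) := rfl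

private def extF {m : ℕ} (c : Fin m → ℤ) : ℕ → ℤ := fun i => if h : i < m then c ⟨i, h⟩ else 0

private def FF (a c : ℕ → ℤ) (m : ℕ) : ℤ :=
  ∑ i ∈ Finset.range m, ∑ j ∈ Finset.range m, c i * gN a i j * c j

lemma CForm_eq_FF (n : ℕ) (a : ℕ → ℤ) (c : Fin (n + 1) → ℤ) :
    CForm n a c c = FF a (extF c) (n + 1) := by
  unfold CForm FF
  rw [← Fin.sum_univ_eq_sum_range (fun i => ∑ j ∈ Finset.range (n + 1),
    extF c i * gN a i j * extF c j) (n + 1)]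
  refine Finset.sum_congr rfl fun i _ => ?_
  rw [← Fin.sum_univ_eq_sum_range (fun j => extF c (i : ℕ) * gN a (i : ℕ) j * extF c j) (n + 1)]
  refine Finset.sum_congr rfl fun j _ => ?_
  rw [CGram_eq]
  simp [extF, Fin.eta, i.isLt, j.isLt]

lemma gN_right0 (a : ℕ → ℤ) (i m : ℕ) (hm : 2 ≤ m) (hi : i < m) (hne : i ≠ m - 1) :
    gN a i m = 0 := by
  unfold gN
  split_ifs <;> first | rfl | (exfalso; omega)

lemma gN_left0 (a : ℕ → ℤ) (j m : ℕ) (hm : 2 ≤ m) (hj : j < m) (hne : j ≠ m - 1) :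
    gN a m j = 0 := by
  unfold gN
  split_ifs <;> first | rfl | (exfalso; omega)

lemma gN_diag (a : ℕ → ℤ) (m : ℕ) (hm : 1 ≤ m) : gN a m m = a m := by
  unfold gN
  split_ifs <;> first | rfl | (exfalso; omega)

lemma gN_subdiag (a : ℕ → ℤ) (m : ℕ) (hm : 2 ≤ m) : gN a (m - 1) m = -1 ∧ gN a m (m - 1) = -1 := by
  unfold gN
  constructor <;> (split_ifs <;> first | rfl | (exfalso; omega))

lemma FF_two (a c : ℕ → ℤ) : FF a c 2 = 4 * c 0 ^ 2 - 4 * (c 0 * c 1) + a 1 * c 1 ^ 2 := by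
  unfold FF
  simp [Finset.sum_range_succ, gN]
  ring

lemma FF_succ (a c : ℕ → ℤ) (m : ℕ) (hm : 2 ≤ m) :
    FF a c (m + 1) = FF a c m + a m * c m ^ 2 - 2 * (c (m - 1) * c m) := by
  unfold FF
  rw [Finset.sum_range_succ]
  have h1 : ∀ i ∈ Finset.range m, (∑ j ∈ Finset.range (m + 1), c i * gN a i j * c j)
      = (∑ j ∈ Finset.range m, c i * gN a i j * c j) + c i * gN a i m * c m := by
    intro i _
    exact Finset.sum_range_succ _ _
  rw [Finset.sum_congr rfl h1, Finset.sum_add_distrib]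
  have h2 : (∑ i ∈ Finset.range m, c i * gN a i m * c m) = c (m - 1) * (-1) * c m := by
    rw [Finset.sum_eq_single (m - 1)]
    · rw [(gN_subdiag a m hm).1]
    · intro i hi hne
      rw [gN_right0 a i m hm (Finset.mem_range.mp hi) hne]
      ring
    · intro h
      exact absurd (Finset.mem_range.mpr (by omega)) h
  have h3 : (∑ j ∈ Finset.range (m + 1), c m * gN a m j * c j)
      = c m * (-1) * c (m - 1) + c m * a m * c m := by
    rw [Finset.sum_range_succ, gN_diag a m (by omega)]
    congr 1
    rw [Finset.sum_eq_single (m - 1)]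
    · rw [(gN_subdiag a m hm).2]
    · intro j hj hne
      rw [gN_left0 a j m hm (Finset.mem_range.mp hj) hne]
      ring
    · intro h
      exact absurd (Finset.mem_range.mpr (by omega)) h
  rw [h2, h3]
  ring

lemma FF_eq (a c : ℕ → ℤ) (k : ℕ) :
    FF a c (k + 2) = 4 * c 0 ^ 2 - 4 * (c 0 * c 1) +
      Sf (k + 1) (fun i => a (i + 1)) (fun i => c (i + 1)) := by
  induction k with
  | zero =>
    rw [FF_two, Sf_one]
  | succ l ih =>
    rw [FF_succ a c (l + 2) (by omega), show l + 2 - 1 = l + 1 from rfl, ih,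
      Sf_top l (fun i => a (i + 1)) (fun i => c (i + 1))]
    ring

lemma CForm_bridge (n : ℕ) (hn : 1 ≤ n) (a : ℕ → ℤ) (c : Fin (n + 1) → ℤ) :
    CForm n a c c = 4 * (c 0) ^ 2 - 4 * (c 0 * c 1) +
      Sf n (fun i => a (i + 1)) (fun i => extF c (i + 1)) := by
  obtain ⟨k, rfl⟩ : ∃ k, n = k + 1 := ⟨n - 1, by omega⟩
  rw [CForm_eq_FF, FF_eq]
  have e0 : extF c 0 = c 0 := by
    simp [extF]
  have e1 : extF c 1 = c 1 := by
    simp only [extF, dif_pos (show 1 < k + 1 + 1 by omega)]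
    congr 1
  rw [e0, e1]
/- ===== key lemmas about the C form ===== -/

lemma CForm_key (n : ℕ) (a : ℕ → ℤ) (hC : CTypeParams n a) (c : Fin (n + 1) → ℤ) :
    CForm n a c c ≠ 1 ∧ (CForm n a c c = 2 → ∃ t, c 1 = 2 * t) := by
  obtain ⟨hn, ha2, ha3⟩ := hC
  obtain ⟨m, rfl⟩ : ∃ m, n = m + 1 := ⟨n - 1, by omega⟩
  have hb := CForm_bridge (m + 1) (by omega) a c
  set a' : ℕ → ℤ := fun i => a (i + 1) with ha'
  set c' : ℕ → ℤ := fun i => extF c (i + 1) with hc'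
  have ha'2 : ∀ i, i < m + 1 → 2 ≤ a' i := fun i hi => ha2 (i + 1) (by omega) (by omega)
  have ha'3 : 3 ≤ a' 0 := ha3
  have hc'0 : c' 0 = c 1 := by
    show extF c 1 = c 1
    simp only [extF, dif_pos (show 1 < m + 1 + 1 by omega)]
    congr 1
  set x := c 0 with hx
  set y := c 1 with hy
  obtain ⟨hge1, hge2⟩ := Sf_ge m a' c' ha'2
  rw [hc'0] at hge1 hge2
  have hbig : y ≠ 0 → y ^ 2 + 2 ≤ Sf (m + 1) a' c' := by
    intro h
    have := Sf_big m a' c' ha'2 ha'3 (by rw [hc'0]; exact h)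
    rwa [hc'0] at this
  have hodd : (∀ t : ℤ, y ≠ 2 * t) → 3 ≤ CForm (m + 1) a c c := by
    intro h
    have hy0 : y ≠ 0 := fun h0 => h 0 (by omega)
    have h2xy : 2 * x - y ≠ 0 := by
      intro h0
      exact h x (by omega)
    have h1 : 1 ≤ (2 * x - y) ^ 2 := one_le_sq h2xy
    have h2 := hbig hy0
    rw [hb]
    nlinarith
  constructor
  · intro he
    rcases Int.even_or_odd y with ⟨t, ht⟩ | ⟨t, ht⟩
    · -- y even
      have hyt : y = 2 * t := by omega
      rw [hb] at he
      have hexp : 4 * x ^ 2 - 4 * (x * y) + Sf (m + 1) a' c'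
          = 4 * (x - t) ^ 2 + (Sf (m + 1) a' c' - y ^ 2) := by
        rw [hyt]; ring
      rw [hexp] at he
      have hnn : 0 ≤ (x - t) ^ 2 := sq_nonneg _
      rcases eq_or_ne (x - t) 0 with h0 | h0
      · rw [h0] at he
        rcases eq_or_ne y 0 with hy0 | hy0
        · -- S = 1
          have : Sf (m + 1) a' c' = 1 := by rw [hy0] at he; simpa using he
          exact Sf_ne_one (m + 1) a' c' ha'2 this
        · have := hbig hy0
          nlinarith
      · have := one_le_sq h0
        nlinarith
    · -- y odd
      have : ∀ s : ℤ, y ≠ 2 * s := fun s hs => by omega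
      have := hodd this
      omega
  · intro he
    rcases Int.even_or_odd y with ⟨t, ht⟩ | ⟨t, ht⟩
    · exact ⟨t, by omega⟩
    · have : ∀ s : ℤ, y ≠ 2 * s := fun s hs => by omega
      have := hodd this
      omega

lemma fin_ne01 (n : ℕ) (hn : 1 ≤ n) : ((0 : Fin (n + 1)) : ℕ) = 0 ∧ ((1 : Fin (n + 1)) : ℕ) = 1 := by
  refine ⟨rfl, ?_⟩
  rw [Fin.val_one']
  exact Nat.mod_eq_of_lt (by omega)

lemma CForm_single0 (n : ℕ) (hn : 1 ≤ n) (a : ℕ → ℤ) (c : Fin (n + 1) → ℤ) :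
    CForm n a (Pi.single 0 1) c = 4 * c 0 - 2 * c 1 := by
  obtain ⟨hv0, hv1⟩ := fin_ne01 n hn
  have h01 : (0 : Fin (n + 1)) ≠ 1 := by
    intro h
    rw [Fin.ext_iff, hv0, hv1] at h
    omega
  unfold CForm
  rw [Finset.sum_eq_single (0 : Fin (n + 1))]
  · have hsub : ({0, 1} : Finset (Fin (n + 1))) ⊆ Finset.univ := Finset.subset_univ _
    rw [← Finset.sum_subset hsub]
    · rw [Finset.sum_pair h01]
      have g00 : CGram n a 0 0 = 4 := by
        rw [CGram_eq]
        unfold gN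
        rw [hv0]
        norm_num
      have g01 : CGram n a 0 1 = -2 := by
        rw [CGram_eq]
        unfold gN
        rw [hv0, hv1]
        norm_num
      rw [g00, g01, Pi.single_eq_same]
      ring
    · intro j _ hj
      simp only [Finset.mem_insert, Finset.mem_singleton] at hj
      push_neg at hj
      obtain ⟨hj0, hj1⟩ := hj
      have hj0' : (j : ℕ) ≠ 0 := by
        intro h; exact hj0 (Fin.ext (by rw [h, hv0]))
      have hj1' : (j : ℕ) ≠ 1 := by
        intro h; exact hj1 (Fin.ext (by rw [h, hv1]))
      have : CGram n a 0 j = 0 := by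
        rw [CGram_eq]
        unfold gN
        rw [hv0]
        split_ifs <;> first | rfl | (exfalso; omega) | (exfalso; simp_all) | (exfalso; simp_all; omega)
      rw [this]
      ring
  · intro i _ hi
    rw [Pi.single_eq_of_ne hi]
    simp
  · intro h
    exact absurd (Finset.mem_univ _) h

lemma CForm_x0_x0 (n : ℕ) (hn : 1 ≤ n) (a : ℕ → ℤ) :
    CForm n a (Pi.single 0 1) (Pi.single 0 1) = 4 := by
  rw [CForm_single0 n hn a]
  have h10 : (1 : Fin (n + 1)) ≠ 0 := by
    obtain ⟨hv0, hv1⟩ := fin_ne01 n hn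
    intro h
    rw [Fin.ext_iff, hv0, hv1] at h
    omega
  rw [Pi.single_eq_same, Pi.single_eq_of_ne h10]
  ring

/- ===== dot product helpers ===== -/

lemma dotF_sub_left {m : ℕ} (u v w : Fin m → ℤ) : dotF (u - v) w = dotF u w - dotF v w := by
  simp [dotF, sub_mul, Finset.sum_sub_distrib]

lemma dotF_sub_right {m : ℕ} (u v w : Fin m → ℤ) : dotF u (v - w) = dotF u v - dotF u w := by
  simp [dotF, mul_sub, Finset.sum_sub_distrib]

lemma dotF_smul_left {m : ℕ} (r : ℤ) (v w : Fin m → ℤ) : dotF (r • v) w = r * dotF v w := by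
  simp [dotF, Finset.mul_sum, mul_assoc]

lemma dotF_single_left {m : ℕ} (b : Fin m) (f : Fin m → ℤ) :
    dotF (Pi.single b 1) f = f b := by
  simp [dotF, Pi.single_apply, ite_mul, Finset.sum_ite_eq']

lemma dotF_single_right {m : ℕ} (b : Fin m) (f : Fin m → ℤ) :
    dotF f (Pi.single b 1) = f b := by
  simp [dotF, Pi.single_apply, mul_ite, Finset.sum_ite_eq']

lemma mem_perp {m : ℕ} (σ x : Fin m → ℤ) : x ∈ perp σ ↔ dotF x σ = 0 := Iff.rfl
/- ===== helpers for the main theorem ===== -/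

lemma dotF_smul_right {m : ℕ} (r : ℤ) (v w : Fin m → ℤ) : dotF v (r • w) = r * dotF v w := by
  unfold dotF
  rw [Finset.mul_sum]
  refine Finset.sum_congr rfl fun i _ => ?_
  simp only [Pi.smul_apply, smul_eq_mul]
  ring

lemma sq_cases {s : ℤ} (h2 : 2 ≤ s ^ 2) (h4 : s ^ 2 ≤ 4) : s = 2 ∨ s = -2 := by
  have hl : -2 ≤ s := by nlinarith
  have hr : s ≤ 2 := by nlinarith
  have h1 : s ≠ 1 := by rintro rfl; norm_num at h2
  have h0 : s ≠ 0 := by rintro rfl; norm_num at h2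
  have hm1 : s ≠ -1 := by rintro rfl; norm_num at h2
  omega

lemma sort3 {N : ℕ} (a b c : Fin N) (hab : a ≠ b) (hac : a ≠ c) (hbc : b ≠ c) :
    ∃ x y z : Fin N, x < y ∧ y < z ∧ ({a, b, c} : Finset (Fin N)) = {x, y, z} := by
  rcases lt_trichotomy a b with h1 | h1 | h1
  · rcases lt_trichotomy b c with h2 | h2 | h2
    · exact ⟨a, b, c, h1, h2, rfl⟩
    · exact absurd h2 hbc
    · rcases lt_trichotomy a c with h3 | h3 | h3
      · exact ⟨a, c, b, h3, h2, by ext t; simp; tauto⟩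
      · exact absurd h3 hac
      · exact ⟨c, a, b, h3, h1, by ext t; simp; tauto⟩
  · exact absurd h1 hab
  · rcases lt_trichotomy a c with h2 | h2 | h2
    · exact ⟨b, a, c, h1, h2, by ext t; simp; tauto⟩
    · exact absurd h2 hac
    · rcases lt_trichotomy b c with h3 | h3 | h3
      · exact ⟨b, c, a, h3, h2, by ext t; simp; tauto⟩
      · exact absurd h3 hbc
      · exact ⟨c, b, a, h3, h1, by ext t; simp; tauto⟩

lemma vec_char1 {N : ℕ} (w : Fin (N + 1) → ℤ) (x y z : Fin (N + 1))
    (hx0 : x ≠ 0) (hy0 : y ≠ 0) (hz0 : z ≠ 0) (hxy : x ≠ y) (hxz : x ≠ z) (hyz : y ≠ z)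
    (hw0 : w 0 = 1) (hwx : w x = 1) (hwy : w y = 1) (hwz : w z = -1)
    (hout : ∀ i, i ≠ 0 → i ≠ x → i ≠ y → i ≠ z → w i = 0) :
    w = Pi.single 0 1 + Pi.single x 1 + Pi.single y 1 - Pi.single z 1 := by
  funext i
  simp only [Pi.add_apply, Pi.sub_apply, Pi.single_apply]
  by_cases h1 : i = 0
  · subst h1
    rw [if_pos rfl, if_neg (Ne.symm hx0), if_neg (Ne.symm hy0), if_neg (Ne.symm hz0), hw0]
    ring
  · rw [if_neg h1]
    by_cases h2 : i = x
    · subst h2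
      rw [if_pos rfl, if_neg hxy, if_neg hxz, hwx]
      ring
    · rw [if_neg h2]
      by_cases h3 : i = y
      · subst h3
        rw [if_pos rfl, if_neg hyz, hwy]
        ring
      · rw [if_neg h3]
        by_cases h4 : i = z
        · subst h4
          rw [if_pos rfl, hwz]
          ring
        · rw [if_neg h4, hout i h1 h2 h3 h4]
          ring

lemma vec_char2 {N : ℕ} (w : Fin (N + 1) → ℤ) (x y z : Fin (N + 1))
    (hx0 : x ≠ 0) (hy0 : y ≠ 0) (hz0 : z ≠ 0) (hxy : x ≠ y) (hxz : x ≠ z) (hyz : y ≠ z)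
    (hw0 : w 0 = 1) (hwx : w x = -1) (hwy : w y = -1) (hwz : w z = 1)
    (hout : ∀ i, i ≠ 0 → i ≠ x → i ≠ y → i ≠ z → w i = 0) :
    w = Pi.single 0 1 - Pi.single x 1 - Pi.single y 1 + Pi.single z 1 := by
  funext i
  simp only [Pi.add_apply, Pi.sub_apply, Pi.single_apply]
  by_cases h1 : i = 0
  · subst h1
    rw [if_pos rfl, if_neg (Ne.symm hx0), if_neg (Ne.symm hy0), if_neg (Ne.symm hz0), hw0]
    ring
  · rw [if_neg h1]
    by_cases h2 : i = x
    · subst h2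
      rw [if_pos rfl, if_neg hxy, if_neg hxz, hwx]
      ring
    · rw [if_neg h2]
      by_cases h3 : i = y
      · subst h3
        rw [if_pos rfl, if_neg hyz, hwy]
        ring
      · rw [if_neg h3]
        by_cases h4 : i = z
        · subst h4
          rw [if_pos rfl, hwz]
          ring
        · rw [if_neg h4, hout i h1 h2 h3 h4]
          ring

lemma bad_contra (n : ℕ) (a : ℕ → ℤ) (hC : CTypeParams n a) (σ : Fin (n + 2) → ℤ)
    (φ : (Fin (n + 1) → ℤ) ≃ₗ[ℤ] perp σ)
    (hφ : ∀ v w : Fin (n + 1) → ℤ,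
      CForm n a v w = dotF (φ v : Fin (n + 2) → ℤ) (φ w : Fin (n + 2) → ℤ))
    (j j' : Fin (n + 2)) (hne : j ≠ j') (hσe : σ j = σ j')
    (hd : dotF (φ (Pi.single 0 1) : Fin (n + 2) → ℤ) (Pi.single j 1 - Pi.single j' 1) = 2 ∨
          dotF (φ (Pi.single 0 1) : Fin (n + 2) → ℤ) (Pi.single j 1 - Pi.single j' 1) = -2) :
    False := by
  have hn := hC.1
  have hw : (Pi.single j (1 : ℤ) - Pi.single j' 1) ∈ perp σ := by
    rw [mem_perp, dotF_sub_left, dotF_single_left, dotF_single_left, hσe, sub_self]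
  set c := φ.symm ⟨_, hw⟩ with hcdef
  have hφc : (φ c : Fin (n + 2) → ℤ) = Pi.single j 1 - Pi.single j' 1 := by
    rw [hcdef, φ.apply_symm_apply]
  have hcc : CForm n a c c = 2 := by
    rw [hφ, hφc, dotF_sub_left, dotF_single_left, dotF_single_left]
    simp [Pi.sub_apply, Pi.single_apply, hne, Ne.symm hne]
  obtain ⟨t, ht⟩ := (CForm_key n a hC c).2 hcc
  have h1 : CForm n a (Pi.single 0 1) c = 4 * c 0 - 2 * c 1 := CForm_single0 n hn a c
  have h2 : CForm n a (Pi.single 0 1) c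
      = dotF (φ (Pi.single 0 1) : Fin (n + 2) → ℤ) (Pi.single j 1 - Pi.single j' 1) := by
    rw [hφ, hφc]
  rw [h1, ht] at h2
  omega
/-- Proposition 4.11: if `(σ)^⊥` is isometric to a C-type lattice via
`φ`, then `σ_0 = 1` and there are indices `0 < k_1 < k_2 < k_3` such that `φ(x_0)` or
`-φ(x_0)` equals `e_0 + e_{k_1} + e_{k_2} - e_{k_3}` or `e_0 - e_{k_1} - e_{k_2} + e_{k_3}`. -/
theorem statement9 (n : ℕ) (a : ℕ → ℤ) (hC : CTypeParams n a)
    (σ : Fin (n + 2) → ℤ) (hσ : IsChangemaker (n + 2) σ)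
    (φ : (Fin (n + 1) → ℤ) ≃ₗ[ℤ] perp σ)
    (hφ : ∀ v w : Fin (n + 1) → ℤ,
      CForm n a v w = dotF (φ v : Fin (n + 2) → ℤ) (φ w : Fin (n + 2) → ℤ)) :
    σ 0 = 1 ∧
      ∃ k₁ k₂ k₃ : Fin (n + 2), 0 < k₁ ∧ k₁ < k₂ ∧ k₂ < k₃ ∧
        ((φ (Pi.single 0 1) : Fin (n + 2) → ℤ) =
            Pi.single 0 1 + Pi.single k₁ 1 + Pi.single k₂ 1 - Pi.single k₃ 1 ∨
          -(φ (Pi.single 0 1) : Fin (n + 2) → ℤ) =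
            Pi.single 0 1 + Pi.single k₁ 1 + Pi.single k₂ 1 - Pi.single k₃ 1 ∨
          (φ (Pi.single 0 1) : Fin (n + 2) → ℤ) =
            Pi.single 0 1 - Pi.single k₁ 1 - Pi.single k₂ 1 + Pi.single k₃ 1 ∨
          -(φ (Pi.single 0 1) : Fin (n + 2) → ℤ) =
            Pi.single 0 1 - Pi.single k₁ 1 - Pi.single k₂ 1 + Pi.single k₃ 1) := by
  have hn : 1 ≤ n := hC.1
  obtain ⟨hmono, hnonneg, hcm⟩ := hσ
  have hσ0 : σ 0 = 1 := by
    rcases lt_trichotomy (σ 0) 1 with h | h | h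
    · have h0 : σ 0 = 0 := le_antisymm (by omega) (hnonneg 0)
      exfalso
      have hmem : Pi.single (0 : Fin (n + 2)) (1 : ℤ) ∈ perp σ := by
        rw [mem_perp, dotF_single_left, h0]
      set c := φ.symm ⟨_, hmem⟩ with hcdef
      have hφc : (φ c : Fin (n + 2) → ℤ) = Pi.single 0 1 := by
        rw [hcdef, φ.apply_symm_apply]
      have : CForm n a c c = 1 := by
        rw [hφ, hφc, dotF_single_left, Pi.single_eq_same]
      exact (CForm_key n a hC c).1 this
    · exact h
    · exfalso
      have hsum2 : (1 : ℤ) ≤ ∑ i, σ i := by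
        have := Finset.single_le_sum (f := σ) (fun i _ => hnonneg i) (Finset.mem_univ 0)
        omega
      obtain ⟨S, hS⟩ := hcm 1 (by norm_num) hsum2
      rcases S.eq_empty_or_nonempty with rfl | ⟨i0, hi0⟩
      · simp at hS
      · have h2 : σ 0 ≤ σ i0 := hmono (Fin.zero_le i0)
        have h3 : σ i0 ≤ ∑ i ∈ S, σ i := Finset.single_le_sum (fun i _ => hnonneg i) hi0
        omega
  set v := (φ (Pi.single 0 1) : Fin (n + 2) → ℤ) with hv
  have hvperp : dotF v σ = 0 := by
    rw [hv]
    exact (mem_perp σ _).mp (φ (Pi.single 0 1)).2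
  have h4 : dotF v v = 4 := by
    rw [hv, ← hφ]
    exact CForm_x0_x0 n hn a
  have hsum : ∑ i, v i ^ 2 = 4 := by
    rw [← h4]
    unfold dotF
    exact Finset.sum_congr rfl fun i _ => pow_two (v i)
  have parity : ∀ i : Fin (n + 2), ∃ t, v i = σ i * v 0 - 2 * t := by
    intro i
    have hw : (σ i • Pi.single (0 : Fin (n + 2)) (1 : ℤ) - Pi.single i 1) ∈ perp σ := by
      rw [mem_perp, dotF_sub_left, dotF_smul_left, dotF_single_left, dotF_single_left, hσ0]
      ring
    set c := φ.symm ⟨_, hw⟩ with hcdef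
    have hφc : (φ c : Fin (n + 2) → ℤ) = σ i • Pi.single 0 1 - Pi.single i 1 := by
      rw [hcdef, φ.apply_symm_apply]
    have h1 : CForm n a (Pi.single 0 1) c = 4 * c 0 - 2 * c 1 := CForm_single0 n hn a c
    have h2 : CForm n a (Pi.single 0 1) c = σ i * v 0 - v i := by
      rw [hv, hφ, hφc, dotF_sub_right, dotF_smul_right, dotF_single_right, dotF_single_right]
    exact ⟨2 * c 0 - c 1, by omega⟩
  refine ⟨hσ0, ?_⟩
  by_cases hall : ∀ i, v i ^ 2 ≤ 1
  case neg =>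
    exfalso
    push_neg at hall
    obtain ⟨k, hk⟩ := hall
    have hsplit : ∑ i ∈ Finset.univ.erase k, v i ^ 2 + v k ^ 2 = 4 := by
      have := Finset.sum_erase_add Finset.univ (fun i => v i ^ 2) (Finset.mem_univ k)
      simpa [hsum] using this
    have hnn : 0 ≤ ∑ i ∈ Finset.univ.erase k, v i ^ 2 :=
      Finset.sum_nonneg fun i _ => sq_nonneg _
    have hk4 : v k ^ 2 ≤ 4 := by linarith
    have hvk : v k = 2 ∨ v k = -2 := sq_cases (by linarith) hk4
    have hk44 : v k ^ 2 = 4 := by rcases hvk with h | h <;> rw [h] <;> norm_num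
    have hsz : ∑ i ∈ Finset.univ.erase k, v i ^ 2 = 0 := by linarith
    have hz : ∀ i, i ≠ k → v i = 0 := by
      intro i hik
      have hm : i ∈ Finset.univ.erase k := Finset.mem_erase.mpr ⟨hik, Finset.mem_univ i⟩
      have := (Finset.sum_eq_zero_iff_of_nonneg (fun i _ => sq_nonneg (v i))).mp hsz i hm
      exact pow_eq_zero_iff two_ne_zero |>.mp this
    have hdot : dotF v σ = v k * σ k := by
      unfold dotF
      rw [Finset.sum_eq_single k]
      · intro i _ hik
        rw [hz i hik]; ring
      · intro h; exact absurd (Finset.mem_univ k) h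
    have hzz : v k * σ k = 0 := by rw [← hdot, hvperp]
    have hσk : σ k = 0 := by rcases hvk with h | h <;> rw [h] at hzz <;> omega
    have := hmono (Fin.zero_le k)
    omega
  case pos =>
    have hv11 : ∀ i, -1 ≤ v i ∧ v i ≤ 1 := fun i => ⟨by nlinarith [hall i], by nlinarith [hall i]⟩
    set T := Finset.univ.filter (fun i => v i ≠ 0) with hT
    have hmemT : ∀ i, i ∈ T ↔ v i ≠ 0 := by
      intro i; rw [hT]; simp
    have hTsum : ∑ i ∈ T, v i ^ 2 = 4 := by
      rw [← hsum]
      refine Finset.sum_subset (Finset.filter_subset _ _) ?_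
      intro i _ hi
      have : v i = 0 := by by_contra h; exact hi ((hmemT i).mpr h)
      rw [this]; norm_num
    have hcard : T.card = 4 := by
      have h1 : ∑ i ∈ T, v i ^ 2 = ∑ i ∈ T, 1 := by
        refine Finset.sum_congr rfl fun i hi => ?_
        exact le_antisymm (hall i) (one_le_sq ((hmemT i).mp hi))
      rw [h1, Finset.sum_const, nsmul_eq_mul, mul_one] at hTsum
      exact_mod_cast hTsum
    have hv0ne : v 0 ≠ 0 := by
      intro h0
      have hallz : ∀ i, v i = 0 := by
        intro i
        obtain ⟨t, ht⟩ := parity i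
        rw [h0, mul_zero, zero_sub] at ht
        have := hv11 i
        omega
      have hTe : T = ∅ := by
        rw [hT]; ext t; simp [hallz]
      rw [hTe] at hcard
      simp at hcard
    have h0T : (0 : Fin (n + 2)) ∈ T := (hmemT 0).mpr hv0ne
    have hcard3 : (T.erase 0).card = 3 := by
      rw [Finset.card_erase_of_mem h0T, hcard]
    obtain ⟨p, q, r, hpq, hpr, hqr, hTpqr⟩ := Finset.card_eq_three.mp hcard3
    obtain ⟨x, y, z, hxy, hyz, hset⟩ := sort3 p q r hpq hpr hqr
    have hT3 : T.erase 0 = {x, y, z} := hTpqr.trans hset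
    have hxT : x ∈ T.erase 0 := by rw [hT3]; simp
    have hyT : y ∈ T.erase 0 := by rw [hT3]; simp
    have hzT : z ∈ T.erase 0 := by rw [hT3]; simp
    have hxne0 : x ≠ 0 := (Finset.mem_erase.mp hxT).1
    have hyne0 : y ≠ 0 := (Finset.mem_erase.mp hyT).1
    have hzne0 : z ≠ 0 := (Finset.mem_erase.mp hzT).1
    have hvxne : v x ≠ 0 := (hmemT x).mp (Finset.mem_of_mem_erase hxT)
    have hvyne : v y ≠ 0 := (hmemT y).mp (Finset.mem_of_mem_erase hyT)
    have hvzne : v z ≠ 0 := (hmemT z).mp (Finset.mem_of_mem_erase hzT)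
    have hTeq : T = insert 0 ({x, y, z} : Finset (Fin (n + 2))) := by
      rw [← Finset.insert_erase h0T, hT3]
    have houtside : ∀ i, i ≠ 0 → i ≠ x → i ≠ y → i ≠ z → v i = 0 := by
      intro i h1 h2 h3 h4
      by_contra hvi
      have hiT : i ∈ T := (hmemT i).mpr hvi
      rw [hTeq] at hiT
      simp [Finset.mem_insert] at hiT
      tauto
    have hxyne := hxy.ne
    have hyzne := hyz.ne
    have hxzne := (hxy.trans hyz).ne
    have h0notin : (0 : Fin (n + 2)) ∉ ({x, y, z} : Finset (Fin (n + 2))) := by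
      simp [Finset.mem_insert]
      exact ⟨Ne.symm hxne0, Ne.symm hyne0, Ne.symm hzne0⟩
    have hxnotin : x ∉ ({y, z} : Finset (Fin (n + 2))) := by
      simp [Finset.mem_insert]
      exact ⟨hxyne, hxzne⟩
    have hynotin : y ∉ ({z} : Finset (Fin (n + 2))) := by simp [hyzne]
    have hdote : v 0 * σ 0 + (v x * σ x + (v y * σ y + v z * σ z)) = 0 := by
      have hds : dotF v σ = ∑ i ∈ T, v i * σ i := by
        unfold dotF
        refine (Finset.sum_subset (Finset.filter_subset _ _) ?_).symm
        intro i _ hi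
        have : v i = 0 := by by_contra h; exact hi ((hmemT i).mpr h)
        rw [this]; ring
      rw [hvperp] at hds
      rw [hTeq, Finset.sum_insert h0notin, Finset.sum_insert hxnotin, Finset.sum_insert hynotin,
        Finset.sum_singleton] at hds
      linarith [hds]
    have hm0x : σ 0 ≤ σ x := hmono (Fin.zero_le x)
    have hmxy : σ x ≤ σ y := hmono hxy.le
    have hmyz : σ y ≤ σ z := hmono hyz.le
    have hv0pm : v 0 = 1 ∨ v 0 = -1 := by have := hv11 0; omega
    have hvxpm : v x = 1 ∨ v x = -1 := by have := hv11 x; omega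
    have hvypm : v y = 1 ∨ v y = -1 := by have := hv11 y; omega
    have hvzpm : v z = 1 ∨ v z = -1 := by have := hv11 z; omega
    refine ⟨x, y, z, Fin.pos_of_ne_zero hxne0, hxy, hyz, ?_⟩
    have hbc : ∀ j j' : Fin (n + 2), j ≠ j' → σ j = σ j' →
        (v j - v j' = 2 ∨ v j - v j' = -2) → False := by
      intro j j' hne hσe hpm
      refine bad_contra n a hC σ φ hφ j j' hne hσe ?_
      have hcomp : dotF (φ (Pi.single 0 1) : Fin (n + 2) → ℤ)
          (Pi.single j 1 - Pi.single j' 1) = v j - v j' := by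
        rw [← hv, dotF_sub_right, dotF_single_right, dotF_single_right]
      rw [hcomp]
      exact hpm
    rcases hv0pm with h0 | h0 <;> rcases hvxpm with hx1 | hx1 <;>
      rcases hvypm with hy1 | hy1 <;> rcases hvzpm with hz1 | hz1
    -- (1,1,1,1)
    · exfalso; rw [h0, hx1, hy1, hz1] at hdote; omega
    -- (1,1,1,-1)
    · exact Or.inl (vec_char1 v x y z hxne0 hyne0 hzne0 hxyne hxzne hyzne h0 hx1 hy1 hz1 houtside)
    -- (1,1,-1,1)
    · exfalso; rw [h0, hx1, hy1, hz1] at hdote; omega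
    -- (1,1,-1,-1)
    · exfalso
      rw [h0, hx1, hy1, hz1] at hdote
      exact hbc x y hxyne (by omega) (Or.inl (by rw [hx1, hy1]; norm_num))
    -- (1,-1,1,1)
    · exfalso; rw [h0, hx1, hy1, hz1] at hdote; omega
    -- (1,-1,1,-1)
    · exfalso
      rw [h0, hx1, hy1, hz1] at hdote
      exact hbc y z hyzne (by omega) (Or.inl (by rw [hy1, hz1]; norm_num))
    -- (1,-1,-1,1)
    · exact Or.inr (Or.inr (Or.inl
        (vec_char2 v x y z hxne0 hyne0 hzne0 hxyne hxzne hyzne h0 hx1 hy1 hz1 houtside)))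
    -- (1,-1,-1,-1)
    · exfalso; rw [h0, hx1, hy1, hz1] at hdote; omega
    -- (-1,1,1,1)
    · exfalso; rw [h0, hx1, hy1, hz1] at hdote; omega
    -- (-1,1,1,-1)
    · refine Or.inr (Or.inr (Or.inr ?_))
      refine vec_char2 (-v) x y z hxne0 hyne0 hzne0 hxyne hxzne hyzne ?_ ?_ ?_ ?_ ?_
      · simp [h0]
      · simp [hx1]
      · simp [hy1]
      · simp [hz1]
      · intro i h1 h2 h3 h4
        simp [houtside i h1 h2 h3 h4]
    -- (-1,1,-1,1)
    · exfalso
      rw [h0, hx1, hy1, hz1] at hdote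
      exact hbc y z hyzne (by omega) (Or.inr (by rw [hy1, hz1]; norm_num))
    -- (-1,1,-1,-1)
    · exfalso; rw [h0, hx1, hy1, hz1] at hdote; omega
    -- (-1,-1,1,1)
    · exfalso
      rw [h0, hx1, hy1, hz1] at hdote
      exact hbc x y hxyne (by omega) (Or.inr (by rw [hx1, hy1]; norm_num))
    -- (-1,-1,1,-1)
    · exfalso; rw [h0, hx1, hy1, hz1] at hdote; omega
    -- (-1,-1,-1,1)
    · refine Or.inr (Or.inl ?_)
      refine vec_char1 (-v) x y z hxne0 hyne0 hzne0 hxyne hxzne hyzne ?_ ?_ ?_ ?_ ?_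
      · simp [h0]
      · simp [hx1]
      · simp [hy1]
      · simp [hz1]
      · intro i h1 h2 h3 h4
        simp [houtside i h1 h2 h3 h4]
    -- (-1,-1,-1,-1)
    · exfalso; rw [h0, hx1, hy1, hz1] at hdote; omega

end Prism
end
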